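/- arXiv:2508.16353 — 3 statements merged into one kernel-verified Lean document; each statement's English description precedes it below -/
import Mathlib

section
/- Upper bound for the first excited energy: for all sufficiently large k, λ_1(V_k, α) ≤ max{ λ_0(V_{k+r_min}, ∞δ_0), λ_0(V_{k-r_max}, ∞δ_0) }, where r_min = min J and r_max = max J. -/
open Finset Filter Topology Matrix

/-- The (Neumann) discrete Laplacian matrix of the path graph with `n` vertices. -/
noncomputable def pathLap (n : ℕ) : Matrix (Fin n) (Fin n) ℝ :=
  Matrix.of fun i j =>
    if i = j then (if i.val = 0 ∨ i.val = n - 1 then (1 : ℝ) else 2)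
    else if i.val + 1 = j.val ∨ j.val + 1 = i.val then -1 else 0

/-- The diagonal potential matrix: vertex `i` of `Fin (2k+1)` represents the integer `i - k`. -/
noncomputable def potMat (k : ℕ) (α : ℤ → ℝ) : Matrix (Fin (2*k+1)) (Fin (2*k+1)) ℝ :=
  Matrix.diagonal fun i => α ((i : ℤ) - k)

/-- The discrete Schrödinger operator `H_{k,α} = L_k + Σ_j α_j δ_j` on the path `{-k,…,k}`. -/
noncomputable def Hmat (k : ℕ) (α : ℤ → ℝ) : Matrix (Fin (2*k+1)) (Fin (2*k+1)) ℝ :=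
  pathLap (2*k+1) + potMat k α

/-- The set of eigenvalues of a real matrix. -/
def evs {n : ℕ} (M : Matrix (Fin n) (Fin n) ℝ) : Set ℝ :=
  {μ | ∃ f : Fin n → ℝ, f ≠ 0 ∧ M.mulVec f = μ • f}

/-- Lowest eigenvalue. -/
noncomputable def lam0 {n : ℕ} (M : Matrix (Fin n) (Fin n) ℝ) : ℝ := sInf (evs M)

/-- Second-lowest eigenvalue (lowest eigenvalue above the ground state energy). -/
noncomputable def lam1 {n : ℕ} (M : Matrix (Fin n) (Fin n) ℝ) : ℝ :=
  sInf (evs M \ {lam0 M})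

/-- Spectral gap. -/
noncomputable def gap {n : ℕ} (M : Matrix (Fin n) (Fin n) ℝ) : ℝ := lam1 M - lam0 M

/-- `λ_0(V_m, ∞δ_0) = 2 - 2cos(π/(2m+1))`, the Dirichlet ground state energy. -/
noncomputable def dirEVZ (m : ℤ) : ℝ := 2 - 2 * Real.cos (Real.pi / (2 * m + 1))

/-- Index of the integer vertex `j ∈ {-k,…,k}` inside `Fin (2k+1)`. -/
def idx (k : ℕ) (j : ℤ) : Fin (2*k+1) := ⟨(j + k).toNat % (2*k+1), Nat.mod_lt _ (by omega)⟩

/-- `φ` is the normalized strictly positive ground state of `H_{k,α}`. -/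
noncomputable def isGS (k : ℕ) (α : ℤ → ℝ) (φ : Fin (2*k+1) → ℝ) : Prop :=
  (Hmat k α).mulVec φ = lam0 (Hmat k α) • φ ∧ (∑ i, φ i ^ 2 = 1) ∧ ∀ i, 0 < φ i

/-- The single-site potential `α δ_0`. -/
noncomputable def single0 (α : ℝ) : ℤ → ℝ := fun j => if j = 0 then α else 0


lemma sum_single_nat (n m : ℕ) (G : ℕ → ℝ) :
    ∑ j : Fin n, (if j.val = m then G j.val else 0) = if m < n then G m else 0 := by
  by_cases h : m < n
  · rw [if_pos h]
    have key : ∀ j : Fin n, (if j.val = m then G j.val else 0)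
        = if j = ⟨m, h⟩ then G m else 0 := by
      intro j
      by_cases hj : j.val = m
      · rw [if_pos hj, if_pos (Fin.ext hj), hj]
      · rw [if_neg hj, if_neg (fun hh => hj (by rw [hh]))]
    rw [Finset.sum_congr rfl (fun j _ => key j)]
    simp
  · rw [if_neg h]
    apply Finset.sum_eq_zero
    intro j _
    rw [if_neg]
    omega

lemma pathLap_mulVec (n : ℕ) (F : ℕ → ℝ) (i : Fin n) :
    (pathLap n).mulVec (fun j => F j.val) i =
      (if i.val = 0 ∨ i.val = n - 1 then 1 else 2) * F i.val
        - (if i.val + 1 < n then F (i.val + 1) else 0)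
        - (if i.val ≠ 0 then F (i.val - 1) else 0) := by
  have hi := i.isLt
  have key : ∀ j : Fin n, pathLap n i j * F j.val =
      (if j.val = i.val then (if i.val = 0 ∨ i.val = n - 1 then 1 else 2) * F j.val else 0)
      + (-(if j.val = i.val + 1 then F j.val else 0))
      + (-(if (i.val ≠ 0 ∧ j.val = i.val - 1) then F j.val else 0)) := by
    intro j
    have hj := j.isLt
    simp only [pathLap, Matrix.of_apply, ← Fin.val_inj]
    split_ifs <;> (try ring) <;> (exfalso; omega)
  show ∑ j : Fin n, pathLap n i j * F j.val = _
  rw [Finset.sum_congr rfl (fun j _ => key j)]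
  rw [Finset.sum_add_distrib, Finset.sum_add_distrib, Finset.sum_neg_distrib,
    Finset.sum_neg_distrib]
  rw [sum_single_nat n i.val (fun m => (if i.val = 0 ∨ i.val = n - 1 then 1 else 2) * F m),
    sum_single_nat n (i.val + 1) F]
  by_cases h0 : i.val ≠ 0
  · have key2 : ∀ j : Fin n, (if (i.val ≠ 0 ∧ j.val = i.val - 1) then F j.val else 0)
        = (if j.val = i.val - 1 then F j.val else 0) := by
      intro j; by_cases h : j.val = i.val - 1
      · rw [if_pos ⟨h0, h⟩, if_pos h]
      · rw [if_neg (fun hh => h hh.2), if_neg h]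
    rw [Finset.sum_congr rfl (fun j _ => key2 j), sum_single_nat n (i.val - 1) F,
      if_pos hi, if_pos (show i.val - 1 < n by omega), if_pos h0]
    ring
  · push_neg at h0
    have key2 : ∀ j : Fin n, (if (i.val ≠ 0 ∧ j.val = i.val - 1) then F j.val else 0) = 0 := by
      intro j; rw [if_neg (fun hh => hh.1 h0)]
    rw [Finset.sum_congr rfl (fun j _ => key2 j), Finset.sum_const_zero, if_pos hi,
      if_neg (show ¬ i.val ≠ 0 by omega)]
    ring

noncomputable def thp (p : ℕ) : ℝ := Real.pi / (2 * p + 1)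

noncomputable def lU (p : ℕ) : ℕ → ℝ :=
  fun m => if m < p then Real.cos ((m + 1/2) * thp p) else 0

lemma thp_pos (p : ℕ) : 0 < thp p := by
  apply div_pos Real.pi_pos
  positivity

lemma lU_eq (p : ℕ) (m : ℕ) (hm : m ≤ p) : lU p m = Real.cos ((m + 1/2) * thp p) := by
  rcases lt_or_eq_of_le hm with h | h
  · rw [lU, if_pos h]
  · subst h
    rw [lU, if_neg (lt_irrefl _)]
    have : ((m : ℝ) + 1/2) * thp m = Real.pi / 2 := by
      rw [thp]
      have h2 : (2 * (m:ℝ) + 1) ≠ 0 := by positivity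
      field_simp
    rw [this, Real.cos_pi_div_two]

lemma lU_zero_pos (p : ℕ) (hp : 1 ≤ p) : 0 < lU p 0 := by
  rw [lU, if_pos (show (0:ℕ) < p from hp)]
  apply Real.cos_pos_of_mem_Ioo
  constructor
  · have := thp_pos p
    nlinarith [Real.pi_pos]
  · rw [thp]
    have h1 : (1:ℝ) ≤ p := by exact_mod_cast hp
    have h2 : ((0:ℕ) + 1/2 : ℝ) * (Real.pi / (2 * p + 1)) = Real.pi / (2 * (2 * p + 1)) := by
      push_cast
      field_simp
      norm_num
    rw [h2]
    apply div_lt_div_of_pos_left Real.pi_pos (by norm_num)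
    nlinarith

-- key trig identity
lemma cos_step (A B : ℝ) : Real.cos (A + B) = 2 * Real.cos A * Real.cos B - Real.cos (A - B) := by
  rw [Real.cos_add, Real.cos_sub]
  ring

lemma leftEigen (n p : ℕ) (hp : 1 ≤ p) (hpn : p + 1 ≤ n) (i : Fin n) (hip : i.val ≠ p) :
    (pathLap n).mulVec (fun j => lU p j.val) i =
      (if i.val < p then (2 - 2 * Real.cos (thp p)) * lU p i.val else 0) := by
  have hi := i.isLt
  rw [pathLap_mulVec]
  by_cases hlt : i.val < p
  · rw [if_pos hlt]
    have hnend : ¬ (i.val = n - 1) := by omega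
    have h1 : i.val + 1 < n := by omega
    rw [if_pos h1]
    have e0 : lU p i.val = Real.cos ((i.val + 1/2) * thp p) := lU_eq p i.val (by omega)
    have e1 : lU p (i.val + 1) = Real.cos (((i.val:ℝ) + 1 + 1/2) * thp p) := by
      rw [lU_eq p (i.val + 1) (by omega)]
      push_cast
      ring_nf
    by_cases h0 : i.val = 0
    · rw [if_pos (Or.inl h0), if_neg (by omega)]
      rw [e0, e1, h0]
      push_cast
      have key := cos_step ((1/2 : ℝ) * thp p) (thp p)
      have hneg : ((0:ℝ) + 1/2) * thp p - thp p = -((0 + 1/2) * thp p) := by ring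
      have : ((0:ℝ) + 1 + 1/2) * thp p = (1/2 : ℝ) * thp p + thp p := by ring
      rw [this, key]
      have : (1/2:ℝ) * thp p - thp p = -((1/2:ℝ) * thp p) := by ring
      rw [this, Real.cos_neg]
      ring_nf
    · rw [if_neg (by omega), if_pos h0]
      have e2 : lU p (i.val - 1) = Real.cos (((i.val:ℝ) - 1 + 1/2) * thp p) := by
        rw [lU_eq p (i.val - 1) (by omega)]
        have : ((i.val - 1 : ℕ) : ℝ) = (i.val : ℝ) - 1 := by
          have : 1 ≤ i.val := by omega
          push_cast [this]
          ring
        rw [this]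
      rw [e0, e1, e2]
      have key := cos_step (((i.val:ℝ) + 1/2) * thp p) (thp p)
      have ha : ((i.val:ℝ) + 1 + 1/2) * thp p = ((i.val:ℝ) + 1/2) * thp p + thp p := by ring
      have hb : ((i.val:ℝ) - 1 + 1/2) * thp p = ((i.val:ℝ) + 1/2) * thp p - thp p := by ring
      rw [ha, key, hb]
      ring
  · rw [if_neg hlt]
    have hz0 : lU p i.val = 0 := by rw [lU, if_neg hlt]
    have hz1 : lU p (i.val + 1) = 0 := by rw [lU, if_neg (by omega)]
    have hz2 : lU p (i.val - 1) = 0 := by rw [lU, if_neg (by omega)]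
    rw [hz0, hz1, hz2]
    split_ifs <;> ring

lemma pathLap_rev (n : ℕ) (i j : Fin n) :
    pathLap n (Fin.rev i) (Fin.rev j) = pathLap n i j := by
  have hi := i.isLt
  have hj := j.isLt
  simp only [pathLap, Matrix.of_apply, ← Fin.val_inj, Fin.val_rev]
  split_ifs <;> (try rfl) <;> (exfalso; omega)

lemma pathLap_mulVec_rev (n : ℕ) (f : Fin n → ℝ) (i : Fin n) :
    (pathLap n).mulVec (fun j => f (Fin.rev j)) i = (pathLap n).mulVec f (Fin.rev i) := by
  show ∑ j : Fin n, pathLap n i j * f (Fin.rev j) = ∑ j : Fin n, pathLap n (Fin.rev i) j * f j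
  rw [← Equiv.sum_comp ((Fin.revPerm : Equiv.Perm (Fin _)))
    (fun j => pathLap n (Fin.rev i) j * f j)]
  apply Finset.sum_congr rfl
  intro j _
  simp only [Fin.revPerm_apply]
  rw [show pathLap n (Fin.rev i) (Fin.rev j) = pathLap n i j from pathLap_rev n i j]

section Spectral

variable {n : ℕ} (A : Matrix (Fin n) (Fin n) ℝ)

lemma dot_mulVec_symm (hs : ∀ i j, A i j = A j i) (x y : Fin n → ℝ) :
    x ⬝ᵥ (A.mulVec y) = (A.mulVec x) ⬝ᵥ y := by
  simp only [dotProduct, mulVec]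
  simp only [dotProduct, Finset.mul_sum, Finset.sum_mul]
  rw [Finset.sum_comm]
  apply Finset.sum_congr rfl
  intro j _
  apply Finset.sum_congr rfl
  intro i _
  rw [hs i j]
  ring

lemma isHerm_of_symm (hs : ∀ i j, A i j = A j i) : A.IsHermitian := by
  ext i j
  simp only [Matrix.conjTranspose_apply, star_trivial]
  exact hs j i

lemma inner_eq_dot (x y : EuclideanSpace ℝ (Fin n)) :
    (inner ℝ x y : ℝ) = (x : Fin n → ℝ) ⬝ᵥ (y : Fin n → ℝ) := by
  simp [PiLp.inner_apply, dotProduct, mul_comm]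

-- expansion of any vector in the eigenbasis, in dotProduct terms
lemma eigen_expand (hA : A.IsHermitian) (w : Fin n → ℝ) (j : Fin n) :
    w j = ∑ i, ((hA.eigenvectorBasis i : Fin n → ℝ) ⬝ᵥ w)
      * (hA.eigenvectorBasis i : Fin n → ℝ) j := by
  have h := hA.eigenvectorBasis.sum_repr' (WithLp.toLp 2 w : EuclideanSpace ℝ (Fin n))
  have h2 := congrFun (congrArg (fun z : EuclideanSpace ℝ (Fin n) => (z : Fin n → ℝ)) h) j
  simp only at h2
  rw [← h2]
  rw [WithLp.ofLp_sum, Finset.sum_apply]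
  apply Finset.sum_congr rfl
  intro i _
  rw [PiLp.smul_apply, smul_eq_mul, inner_eq_dot]

end Spectral

section Spectral2

variable {n : ℕ} {A : Matrix (Fin n) (Fin n) ℝ}

lemma symm_of_isHerm (hA : A.IsHermitian) : ∀ i j, A i j = A j i := by
  intro i j
  conv_lhs => rw [← hA]
  simp [Matrix.conjTranspose_apply]

lemma evs_subset_range (hA : A.IsHermitian) : evs A ⊆ Set.range hA.eigenvalues := by
  rintro μ ⟨f, hfne, hf⟩
  have hex : ∃ i, ((hA.eigenvectorBasis i : Fin n → ℝ) ⬝ᵥ f) ≠ 0 := by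
    by_contra hc
    push_neg at hc
    apply hfne
    funext j
    rw [eigen_expand A hA f j]
    simp only [hc]
    simp
  obtain ⟨i, hi⟩ := hex
  refine ⟨i, ?_⟩
  have h1 : (hA.eigenvectorBasis i : Fin n → ℝ) ⬝ᵥ (A.mulVec f)
      = μ * ((hA.eigenvectorBasis i : Fin n → ℝ) ⬝ᵥ f) := by
    rw [hf]
    simp [dotProduct_smul, smul_eq_mul]
  have h2 : (hA.eigenvectorBasis i : Fin n → ℝ) ⬝ᵥ (A.mulVec f)
      = hA.eigenvalues i * ((hA.eigenvectorBasis i : Fin n → ℝ) ⬝ᵥ f) := by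
    rw [dot_mulVec_symm A (symm_of_isHerm hA),
      show A.mulVec (hA.eigenvectorBasis i : Fin n → ℝ)
          = hA.eigenvalues i • (hA.eigenvectorBasis i : Fin n → ℝ)
        from hA.mulVec_eigenvectorBasis i]
    rw [smul_dotProduct]
    exact smul_eq_mul _ _
  have := h1.symm.trans h2
  exact (mul_right_cancel₀ hi this).symm

lemma range_subset_evs (hA : A.IsHermitian) : Set.range hA.eigenvalues ⊆ evs A := by
  rintro μ ⟨i, rfl⟩
  refine ⟨(hA.eigenvectorBasis i : Fin n → ℝ), ?_, ?_⟩
  · intro h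
    apply hA.eigenvectorBasis.orthonormal.ne_zero i
    ext j
    exact congrFun h j
  · exact hA.mulVec_eigenvectorBasis i

lemma dot_eigenvectorBasis (hA : A.IsHermitian) (i j : Fin n) :
    (hA.eigenvectorBasis i : Fin n → ℝ) ⬝ᵥ (hA.eigenvectorBasis j : Fin n → ℝ)
      = if i = j then 1 else 0 := by
  rw [← inner_eq_dot]
  exact orthonormal_iff_ite.mp hA.eigenvectorBasis.orthonormal i j

end Spectral2

-- simplicity of eigenvalues for the Jacobi matrix Hmat
lemma eigvec_zero_ext (k : ℕ) (α : ℤ → ℝ) (μ : ℝ) (f : Fin (2*k+1) → ℝ)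
    (hf : (Hmat k α).mulVec f = μ • f) (h0 : f ⟨0, by omega⟩ = 0) : f = 0 := by
  have hF : ∀ (F : ℕ → ℝ), F = (fun m => if h : m < 2*k+1 then f ⟨m, h⟩ else 0) → f = 0 := by
    intro F hFdef
    have hfF : f = fun j : Fin (2*k+1) => F j.val := by
      funext j
      rw [hFdef]
      simp [j.isLt]
    have heig : ∀ i : Fin (2*k+1), (pathLap (2*k+1)).mulVec (fun j => F j.val) i
        + α ((i : ℤ) - k) * F i.val = μ * F i.val := by
      intro i
      have h := congrFun hf i
      rw [Hmat, Matrix.add_mulVec] at h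
      simp only [Pi.add_apply, Pi.smul_apply, smul_eq_mul] at h
      rw [potMat, Matrix.mulVec_diagonal] at h
      rw [hfF] at h
      exact h
    have key : ∀ m, F m = 0 := by
      intro m
      induction m using Nat.strong_induction_on with
      | _ m ih =>
        match m with
        | 0 =>
          rw [hFdef]
          show (if h : (0:ℕ) < 2*k+1 then f ⟨0, h⟩ else 0) = 0
          rw [dif_pos (by omega : (0:ℕ) < 2*k+1)]
          exact h0
        | (m' + 1) =>
          by_cases hm : m' + 1 < 2*k+1
          · have hm' : m' < 2*k+1 := by omega
            have heq := heig ⟨m', hm'⟩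
            rw [pathLap_mulVec] at heq
            simp only at heq
            rw [ih m' (by omega)] at heq
            rw [if_pos (show m' + 1 < 2*k+1 from hm)] at heq
            have hprev : (if m' ≠ 0 then F (m' - 1) else 0) = 0 := by
              by_cases h : m' ≠ 0
              · rw [if_pos h, ih (m'-1) (by omega)]
              · rw [if_neg h]
            rw [hprev] at heq
            linarith
          · rw [hFdef]
            show (if h : m' + 1 < 2*k+1 then f ⟨m' + 1, h⟩ else 0) = 0
            rw [dif_neg hm]
    rw [hfF]
    funext j
    exact key j.val
  exact hF _ rfl

lemma pathLap_symm (n : ℕ) (i j : Fin n) : pathLap n i j = pathLap n j i := by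
  simp only [pathLap, Matrix.of_apply, ← Fin.val_inj]
  split_ifs <;> (try rfl) <;> (exfalso; omega)


set_option maxHeartbeats 2000000 in
/-- upper bound for the first excited energy: for all sufficiently large `k`,
`λ_1(V_k, α) ≤ max{λ_0(V_{k+r_min}, ∞δ_0), λ_0(V_{k-r_max}, ∞δ_0)}`. -/
theorem stmt9 (α : ℤ → ℝ) (J : Finset ℤ) (hne : J.Nonempty)
    (hsupp : ∀ j : ℤ, α j ≠ 0 ↔ j ∈ J) (hpos : ∀ j ∈ J, 0 < α j) :
    ∀ᶠ k : ℕ in atTop,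
      lam1 (Hmat k α) ≤
        max (dirEVZ ((k : ℤ) + J.min' hne)) (dirEVZ ((k : ℤ) - J.max' hne)) := by
  rw [Filter.eventually_atTop]
  refine ⟨((1 : ℤ) - J.min' hne).toNat + ((J.max' hne) + 1).toNat + 1, ?_⟩
  intro k hk
  have hrle : J.min' hne ≤ J.max' hne := J.min'_le (J.max' hne) (J.max'_mem hne)
  have hk1 : 1 ≤ (k:ℤ) + J.min' hne := by omega
  have hk2 : J.max' hne + 1 ≤ (k:ℤ) := by omega
  set p : ℕ := ((k:ℤ) + J.min' hne).toNat with hpdef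
  set q : ℕ := ((k:ℤ) - J.max' hne).toNat with hqdef
  have hpz : (p:ℤ) = (k:ℤ) + J.min' hne := by omega
  have hqz : (q:ℤ) = (k:ℤ) - J.max' hne := by omega
  have hp1 : 1 ≤ p := by omega
  have hq1 : 1 ≤ q := by omega
  have hpn : p + 1 ≤ 2*k+1 := by omega
  have hqn : q + 1 ≤ 2*k+1 := by omega
  have hpq : p + q ≤ 2*k := by omega
  set iL : Fin (2*k+1) := ⟨0, by omega⟩ with hiLdef
  set iR : Fin (2*k+1) := ⟨2*k, by omega⟩ with hiRdef
  have hiLval : iL.val = 0 := rfl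
  have hiRval : iR.val = 2*k := rfl
  -- symmetry
  have hs : ∀ i j, (Hmat k α) i j = (Hmat k α) j i := by
    intro i j
    simp only [Hmat, Matrix.add_apply]
    rw [pathLap_symm]
    congr 1
    by_cases h : i = j
    · subst h; rfl
    · rw [potMat, Matrix.diagonal_apply_ne _ h, Matrix.diagonal_apply_ne _ (Ne.symm h)]
  have hA : (Hmat k α).IsHermitian := isHerm_of_symm _ hs
  -- abbreviations
  set μL : ℝ := 2 - 2 * Real.cos (thp p) with hμLdef
  set μR : ℝ := 2 - 2 * Real.cos (thp q) with hμRdef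
  set c : ℝ := max (dirEVZ ((k : ℤ) + J.min' hne)) (dirEVZ ((k : ℤ) - J.max' hne)) with hcdef
  have hμLc : μL ≤ c := by
    have : μL = dirEVZ ((k : ℤ) + J.min' hne) := by
      rw [hμLdef, dirEVZ, thp, ← hpz]
      push_cast
      ring_nf
    rw [this]
    exact le_max_left _ _
  have hμRc : μR ≤ c := by
    have : μR = dirEVZ ((k : ℤ) - J.max' hne) := by
      rw [hμRdef, dirEVZ, thp, ← hqz]
      push_cast
      ring_nf
    rw [this]
    exact le_max_right _ _
  -- trial vectors
  set u : Fin (2*k+1) → ℝ := fun i => lU p i.val with hudef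
  set v : Fin (2*k+1) → ℝ := fun i => lU q (Fin.rev i).val with hvdef
  have hrev : ∀ i : Fin (2*k+1), (Fin.rev i).val = 2*k - i.val := by
    intro i
    rw [Fin.val_rev]
    omega
  -- potential vanishing
  have hαu : ∀ i : Fin (2*k+1), i.val < p → α ((i:ℤ) - k) = 0 := by
    intro i hi
    by_contra h
    have hmem := (hsupp _).mp h
    have := J.min'_le _ hmem
    omega
  have hαv : ∀ i : Fin (2*k+1), 2*k - q < i.val → α ((i:ℤ) - k) = 0 := by
    intro i hi
    by_contra h
    have hmem := (hsupp _).mp h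
    have := J.le_max' _ hmem
    have hi2 := i.isLt
    omega
  -- action of H on trial vectors
  have hHu : ∀ i : Fin (2*k+1), i.val ≠ p →
      (Hmat k α).mulVec u i = (if i.val < p then μL * u i else 0) := by
    intro i hip
    rw [Hmat, Matrix.add_mulVec]
    simp only [Pi.add_apply]
    rw [potMat, Matrix.mulVec_diagonal]
    rw [hudef]
    rw [leftEigen (2*k+1) p hp1 hpn i hip]
    by_cases h : i.val < p
    · rw [if_pos h, hαu i h]
      show (2 - 2 * Real.cos (thp p)) * lU p i.val + 0 * lU p i.val
        = μL * lU p i.val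
      rw [hμLdef]
      ring
    · rw [if_neg h]
      have hz : lU p i.val = 0 := by rw [lU, if_neg h]
      show 0 + α ((i:ℤ) - k) * lU p i.val = 0
      rw [hz]
      ring
  have hHv : ∀ i : Fin (2*k+1), (Fin.rev i).val ≠ q →
      (Hmat k α).mulVec v i = (if (Fin.rev i).val < q then μR * v i else 0) := by
    intro i hip
    rw [Hmat, Matrix.add_mulVec]
    simp only [Pi.add_apply]
    rw [potMat, Matrix.mulVec_diagonal]
    rw [hvdef]
    rw [pathLap_mulVec_rev (2*k+1) (fun j => lU q j.val) i]
    rw [leftEigen (2*k+1) q hq1 hqn (Fin.rev i) hip]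
    by_cases h : (Fin.rev i).val < q
    · rw [if_pos h]
      have hiz : α ((i:ℤ) - k) = 0 := by
        apply hαv
        have h2 := hrev i
        have h3 := i.isLt
        omega
      rw [hiz]
      show (2 - 2 * Real.cos (thp q)) * lU q (Fin.rev i).val + 0 * lU q (Fin.rev i).val
        = μR * lU q (Fin.rev i).val
      rw [hμRdef]
      ring
    · rw [if_neg h]
      have hz : lU q (Fin.rev i).val = 0 := by rw [lU, if_neg h]
      show 0 + α ((i:ℤ) - k) * lU q (Fin.rev i).val = 0
      rw [hz]
      ring
  -- dot product identities
  have huAu : u ⬝ᵥ (Hmat k α).mulVec u = μL * (u ⬝ᵥ u) := by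
    rw [dotProduct, dotProduct, Finset.mul_sum]
    apply Finset.sum_congr rfl
    intro i _
    by_cases hip : i.val = p
    · have h0 : u i = 0 := by rw [hudef]; simp only; rw [lU, if_neg (by omega)]
      rw [h0]; ring
    · rw [hHu i hip]
      by_cases h : i.val < p
      · rw [if_pos h]; ring
      · have h0 : u i = 0 := by rw [hudef]; simp only; rw [lU, if_neg h]
        rw [if_neg h, h0]; ring
  have hvAv : v ⬝ᵥ (Hmat k α).mulVec v = μR * (v ⬝ᵥ v) := by
    rw [dotProduct, dotProduct, Finset.mul_sum]
    apply Finset.sum_congr rfl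
    intro i _
    by_cases hip : (Fin.rev i).val = q
    · have h0 : v i = 0 := by rw [hvdef]; simp only; rw [lU, if_neg (by omega)]
      rw [h0]; ring
    · rw [hHv i hip]
      by_cases h : (Fin.rev i).val < q
      · rw [if_pos h]; ring
      · have h0 : v i = 0 := by rw [hvdef]; simp only; rw [lU, if_neg h]
        rw [if_neg h, h0]; ring
  have huv : u ⬝ᵥ v = 0 := by
    rw [dotProduct]
    apply Finset.sum_eq_zero
    intro i _
    by_cases h : i.val < p
    · have h0 : v i = 0 := by
        rw [hvdef]; simp only; rw [lU, if_neg (by rw [hrev i]; omega)]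
      rw [h0]; ring
    · have h0 : u i = 0 := by rw [hudef]; simp only; rw [lU, if_neg h]
      rw [h0]; ring
  have huAv : u ⬝ᵥ (Hmat k α).mulVec v = 0 := by
    rw [dotProduct]
    apply Finset.sum_eq_zero
    intro i _
    by_cases h : i.val < p
    · have h1 : (Fin.rev i).val ≠ q := by rw [hrev i]; omega
      rw [hHv i h1, if_neg (by rw [hrev i]; omega)]
      ring
    · have h0 : u i = 0 := by rw [hudef]; simp only; rw [lU, if_neg h]
      rw [h0]; ring
  have hvAu : v ⬝ᵥ (Hmat k α).mulVec u = 0 := by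
    rw [dotProduct]
    apply Finset.sum_eq_zero
    intro i _
    by_cases h : i.val ≤ 2*k - q
    · have h0 : v i = 0 := by
        rw [hvdef]; simp only; rw [lU, if_neg (by rw [hrev i]; omega)]
      rw [h0]; ring
    · have h1 : i.val ≠ p := by omega
      rw [hHu i h1, if_neg (by omega)]
      ring
  -- positivity
  have hu0pos : 0 < u iL := by
    rw [hudef]
    show 0 < lU p iL.val
    rw [hiLval]
    exact lU_zero_pos p hp1
  have hvLpos : 0 < v iR := by
    rw [hvdef]
    show 0 < lU q (Fin.rev iR).val
    have hR : (Fin.rev iR).val = 0 := by rw [hrev, hiRval]; omega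
    rw [hR]
    exact lU_zero_pos q hq1
  have huend : u iR = 0 := by
    rw [hudef]
    show lU p iR.val = 0
    rw [hiRval, lU, if_neg (by omega)]
  have hv0 : v iL = 0 := by
    rw [hvdef]
    show lU q (Fin.rev iL).val = 0
    have hR : (Fin.rev iL).val = 2*k := by rw [hrev, hiLval]; omega
    rw [hR, lU, if_neg (by omega)]
  have huu : 0 < u ⬝ᵥ u := by
    rw [dotProduct]
    apply Finset.sum_pos' (fun i _ => mul_self_nonneg _)
    exact ⟨iL, Finset.mem_univ _, mul_pos hu0pos hu0pos⟩
  have hvv : 0 < v ⬝ᵥ v := by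
    rw [dotProduct]
    apply Finset.sum_pos' (fun i _ => mul_self_nonneg _)
    exact ⟨iR, Finset.mem_univ _, mul_pos hvLpos hvLpos⟩
  -- spectral setup
  have hrange : evs (Hmat k α) = Set.range hA.eigenvalues :=
    subset_antisymm (evs_subset_range hA) (range_subset_evs hA)
  have hfin : (evs (Hmat k α)).Finite := by rw [hrange]; exact Set.finite_range _
  have hnonempty : (evs (Hmat k α)).Nonempty := by
    rw [hrange]
    exact ⟨hA.eigenvalues ⟨0, by omega⟩, Set.mem_range_self _⟩
  have hlam0mem : lam0 (Hmat k α) ∈ evs (Hmat k α) := hnonempty.csInf_mem hfin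
  obtain ⟨i0, hi0⟩ : ∃ i, hA.eigenvalues i = lam0 (Hmat k α) := by
    rw [hrange] at hlam0mem
    exact hlam0mem
  have heigB : ∀ i, (Hmat k α).mulVec (hA.eigenvectorBasis i : Fin (2*k+1) → ℝ)
      = hA.eigenvalues i • (hA.eigenvectorBasis i : Fin (2*k+1) → ℝ) :=
    fun i => hA.mulVec_eigenvectorBasis i
  have hbne : ∀ i, (hA.eigenvectorBasis i : Fin (2*k+1) → ℝ) ≠ 0 := by
    intro i h
    apply hA.eigenvectorBasis.orthonormal.ne_zero i
    ext j
    exact congrFun h j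
  have hb00 : (hA.eigenvectorBasis i0 : Fin (2*k+1) → ℝ) iL ≠ 0 := by
    intro h
    exact hbne i0 (eigvec_zero_ext k α (hA.eigenvalues i0) _ (heigB i0) h)
  have huniq : ∀ i, hA.eigenvalues i = lam0 (Hmat k α) → i = i0 := by
    intro i hiE
    by_contra hne'
    set BI : Fin (2*k+1) → ℝ := (hA.eigenvectorBasis i : Fin (2*k+1) → ℝ) with hBI
    set BI0 : Fin (2*k+1) → ℝ := (hA.eigenvectorBasis i0 : Fin (2*k+1) → ℝ) with hBI0
    have hgeig : (Hmat k α).mulVec (BI0 iL • BI - BI iL • BI0)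
        = lam0 (Hmat k α) • (BI0 iL • BI - BI iL • BI0) := by
      rw [Matrix.mulVec_sub, Matrix.mulVec_smul, Matrix.mulVec_smul, hBI, hBI0,
        heigB i, heigB i0, hiE, hi0]
      funext j
      show BI0 iL * (lam0 (Hmat k α) * BI j) - BI iL * (lam0 (Hmat k α) * BI0 j)
        = lam0 (Hmat k α) * (BI0 iL * BI j - BI iL * BI0 j)
      ring
    have hg0 : (BI0 iL • BI - BI iL • BI0) iL = 0 := by
      show BI0 iL * BI iL - BI iL * BI0 iL = 0
      ring
    have hgz : (BI0 iL • BI - BI iL • BI0) = 0 :=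
      eigvec_zero_ext k α (lam0 (Hmat k α)) _ hgeig hg0
    have hdot := congrArg (fun z => BI ⬝ᵥ z) hgz
    simp only [dotProduct_zero] at hdot
    rw [dotProduct_sub, dotProduct_smul, dotProduct_smul, hBI, hBI0,
      dot_eigenvectorBasis hA i i, dot_eigenvectorBasis hA i i0,
      if_pos rfl, if_neg hne'] at hdot
    simp only [smul_eq_mul, mul_one, mul_zero, sub_zero] at hdot
    exact hb00 hdot
  -- the key claim
  suffices key : ∃ μ, μ ∈ evs (Hmat k α) \ {lam0 (Hmat k α)} ∧ μ ≤ c by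
    obtain ⟨μ, hmem, hle⟩ := key
    have hbdd : BddBelow (evs (Hmat k α) \ {lam0 (Hmat k α)}) :=
      (hfin.subset Set.diff_subset).bddBelow
    exact le_trans (csInf_le hbdd hmem) hle
  by_contra hno
  push_neg at hno
  have hbig : ∀ i, hA.eigenvalues i ≠ lam0 (Hmat k α) → c < hA.eigenvalues i := by
    intro i hi
    exact hno _ ⟨range_subset_evs hA ⟨i, rfl⟩, hi⟩
  -- choose trial vector orthogonal to the ground state
  obtain ⟨s1, s2, hw0, hwne⟩ : ∃ s1 s2 : ℝ,
      ((hA.eigenvectorBasis i0 : Fin (2*k+1) → ℝ) ⬝ᵥ (s1 • u + s2 • v)) = 0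
        ∧ (s1 • u + s2 • v) ≠ 0 := by
    set tu := (hA.eigenvectorBasis i0 : Fin (2*k+1) → ℝ) ⬝ᵥ u with htu
    set tv := (hA.eigenvectorBasis i0 : Fin (2*k+1) → ℝ) ⬝ᵥ v with htv
    by_cases hc0 : tu = 0
    · refine ⟨1, 0, ?_, ?_⟩
      · rw [dotProduct_add, dotProduct_smul, dotProduct_smul, ← htu, ← htv]
        simp [hc0]
      · intro h
        have hc := congrFun h iL
        have hc2 : 1 * u iL + 0 * v iL = 0 := hc
        rw [hv0] at hc2
        simp at hc2
        linarith [hu0pos]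
    · refine ⟨-tv, tu, ?_, ?_⟩
      · rw [dotProduct_add, dotProduct_smul, dotProduct_smul, ← htu, ← htv]
        simp only [smul_eq_mul]
        ring
      · intro h
        have hc := congrFun h iR
        have hc2 : -tv * u iR + tu * v iR = 0 := hc
        rw [huend] at hc2
        have hmz : tu * v iR = 0 := by linarith
        rcases mul_eq_zero.mp hmz with h' | h'
        · exact hc0 h'
        · linarith [hvLpos]
  set w : Fin (2*k+1) → ℝ := s1 • u + s2 • v with hwdef
  -- upper bound on the Rayleigh quotient
  have hAw : (Hmat k α).mulVec w
      = s1 • (Hmat k α).mulVec u + s2 • (Hmat k α).mulVec v := by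
    rw [hwdef, Matrix.mulVec_add, Matrix.mulVec_smul, Matrix.mulVec_smul]
  have hQup : w ⬝ᵥ (Hmat k α).mulVec w ≤ c * (w ⬝ᵥ w) := by
    rw [hAw, hwdef]
    simp only [add_dotProduct, dotProduct_add, smul_dotProduct,
      dotProduct_smul, smul_eq_mul]
    rw [huAu, hvAv, huAv, hvAu, huv, show v ⬝ᵥ u = 0 from (dotProduct_comm u v) ▸ huv]
    have h1 : s1 * (s1 * (μL * (u ⬝ᵥ u))) ≤ s1 * (s1 * (c * (u ⬝ᵥ u))) := by
      nlinarith [mul_nonneg (mul_self_nonneg s1) (le_of_lt huu), hμLc]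
    have h2 : s2 * (s2 * (μR * (v ⬝ᵥ v))) ≤ s2 * (s2 * (c * (v ⬝ᵥ v))) := by
      nlinarith [mul_nonneg (mul_self_nonneg s2) (le_of_lt hvv), hμRc]
    nlinarith [h1, h2]
  -- lower bound via eigen expansion
  set T : Fin (2*k+1) → ℝ := fun i => (hA.eigenvectorBasis i : Fin (2*k+1) → ℝ) ⬝ᵥ w with hTdef
  have hT0 : T i0 = 0 := hw0
  have hwexp : ∀ j, w j = ∑ i, T i * (hA.eigenvectorBasis i : Fin (2*k+1) → ℝ) j := by
    intro j
    have := eigen_expand (Hmat k α) hA w j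
    convert this using 2
  have hsumswap : ∀ y : Fin (2*k+1) → ℝ,
      y ⬝ᵥ y = y ⬝ᵥ y := fun _ => rfl
  have hww : w ⬝ᵥ w = ∑ i, T i * T i := by
    calc w ⬝ᵥ w = ∑ j, (∑ i, T i * (hA.eigenvectorBasis i : Fin (2*k+1) → ℝ) j) * w j := by
          apply Finset.sum_congr rfl
          intro j _
          exact congrArg (fun z => z * w j) (hwexp j)
      _ = ∑ j, ∑ i, (T i * (hA.eigenvectorBasis i : Fin (2*k+1) → ℝ) j) * w j := by
          apply Finset.sum_congr rfl
          intro j _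
          exact Finset.sum_mul _ _ _
      _ = ∑ i, ∑ j, (T i * (hA.eigenvectorBasis i : Fin (2*k+1) → ℝ) j) * w j :=
          Finset.sum_comm
      _ = ∑ i, T i * ((hA.eigenvectorBasis i : Fin (2*k+1) → ℝ) ⬝ᵥ w) := by
          apply Finset.sum_congr rfl
          intro i _
          rw [dotProduct, Finset.mul_sum]
          apply Finset.sum_congr rfl
          intro j _
          ring
      _ = ∑ i, T i * T i := rfl
  have hQw : w ⬝ᵥ (Hmat k α).mulVec w = ∑ i, hA.eigenvalues i * (T i * T i) := by
    calc w ⬝ᵥ (Hmat k α).mulVec w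
        = ∑ j, (∑ i, T i * (hA.eigenvectorBasis i : Fin (2*k+1) → ℝ) j)
            * ((Hmat k α).mulVec w) j := by
          apply Finset.sum_congr rfl
          intro j _
          exact congrArg (fun z => z * ((Hmat k α).mulVec w) j) (hwexp j)
      _ = ∑ j, ∑ i, (T i * (hA.eigenvectorBasis i : Fin (2*k+1) → ℝ) j)
            * ((Hmat k α).mulVec w) j := by
          apply Finset.sum_congr rfl
          intro j _
          exact Finset.sum_mul _ _ _
      _ = ∑ i, ∑ j, (T i * (hA.eigenvectorBasis i : Fin (2*k+1) → ℝ) j)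
            * ((Hmat k α).mulVec w) j := Finset.sum_comm
      _ = ∑ i, T i * ((hA.eigenvectorBasis i : Fin (2*k+1) → ℝ) ⬝ᵥ (Hmat k α).mulVec w) := by
          apply Finset.sum_congr rfl
          intro i _
          rw [dotProduct, Finset.mul_sum]
          apply Finset.sum_congr rfl
          intro j _
          ring
      _ = ∑ i, hA.eigenvalues i * (T i * T i) := by
          apply Finset.sum_congr rfl
          intro i _
          rw [dot_mulVec_symm _ hs, heigB i, smul_dotProduct, smul_eq_mul]
          ring
  have hwpos : 0 < w ⬝ᵥ w := by
    obtain ⟨j, hj⟩ := Function.ne_iff.mp hwne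
    rw [dotProduct]
    apply Finset.sum_pos' (fun i _ => mul_self_nonneg _)
    refine ⟨j, Finset.mem_univ _, mul_self_pos.mpr ?_⟩
    simpa using hj
  obtain ⟨i1, hi1⟩ : ∃ i, T i ≠ 0 := by
    by_contra h
    push_neg at h
    rw [hww] at hwpos
    have : ∑ i, T i * T i = 0 := Finset.sum_eq_zero (fun i _ => by rw [h i]; ring)
    linarith
  have hi1ne : i1 ≠ i0 := fun h => hi1 (h ▸ hT0)
  have hmain : c * (w ⬝ᵥ w) < w ⬝ᵥ (Hmat k α).mulVec w := by
    rw [hww, hQw, Finset.mul_sum]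
    apply Finset.sum_lt_sum
    · intro i _
      by_cases h : i = i0
      · subst h
        rw [hT0]
        simp
      · have hlt : c < hA.eigenvalues i := hbig i (fun hE => h (huniq i hE))
        nlinarith [mul_self_nonneg (T i)]
    · refine ⟨i1, Finset.mem_univ _, ?_⟩
      have hlt : c < hA.eigenvalues i1 := hbig i1 (fun hE => hi1ne (huniq i1 hE))
      nlinarith [mul_self_pos.mpr hi1]
  linarith [hQup, hmain]
end

section
/- Quantitative smallness of a_{k,1} + a_{k,2}: there exists a constant c > 0 independent of k such that 0 ≤ a_{k,1} + a_{k,2} ≤ c · (min_j α_j)^{-1} · k^{-1} for all but finitely many k. -/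
open Finset Filter Topology Matrix

namespace Stmt13Aux

lemma sum_if_succ {n : ℕ} (i : Fin n) (f : Fin n → ℝ) :
    (∑ j : Fin n, if i.val + 1 = j.val then f j else 0)
      = if h : i.val + 1 < n then f ⟨i.val+1, h⟩ else 0 := by
  split
  · rename_i h
    rw [show (fun j : Fin n => if i.val + 1 = j.val then f j else 0)
        = fun j : Fin n => if (⟨i.val+1, h⟩ : Fin n) = j then f j else 0 by
      funext j; congr 1; simp [Fin.ext_iff]]
    rw [Finset.sum_ite_eq]
    simp
  · rename_i h
    apply Finset.sum_eq_zero
    intro j _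
    have := j.isLt
    rw [if_neg]
    omega
  
lemma sum_if_pred {n : ℕ} (i : Fin n) (f : Fin n → ℝ) :
    (∑ j : Fin n, if j.val + 1 = i.val then f j else 0)
      = if h : 0 < i.val then f ⟨i.val - 1, Nat.lt_of_le_of_lt (Nat.sub_le _ _) i.isLt⟩ else 0 := by
  split
  · rename_i h
    have hlt : i.val - 1 < n := Nat.lt_of_le_of_lt (Nat.sub_le _ _) i.isLt
    rw [show (fun j : Fin n => if j.val + 1 = i.val then f j else 0)
        = fun j : Fin n => if (⟨i.val-1, hlt⟩ : Fin n) = j then f j else 0 by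
      funext j; congr 1; simp [Fin.ext_iff]; omega]
    rw [Finset.sum_ite_eq]
    simp
  · rename_i h
    apply Finset.sum_eq_zero
    intro j _
    rw [if_neg]
    omega

lemma hmat_mulVec (k : ℕ) (α : ℤ → ℝ) (φ : Fin (2*k+1) → ℝ) (i : Fin (2*k+1)) :
    (Hmat k α).mulVec φ i =
      (if i.val = 0 ∨ i.val = 2*k then 1 else 2) * φ i
      - (if h : i.val + 1 < 2*k+1 then φ ⟨i.val+1, h⟩ else 0)
      - (if h : 0 < i.val then φ ⟨i.val - 1, Nat.lt_of_le_of_lt (Nat.sub_le _ _) i.isLt⟩ else 0)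
      + α ((i : ℤ) - k) * φ i := by
  rw [Hmat, Matrix.add_mulVec]
  have hpot : (potMat k α).mulVec φ i = α ((i : ℤ) - k) * φ i := by
    rw [potMat, Matrix.mulVec_diagonal]
  rw [Pi.add_apply, hpot]
  congr 1
  rw [Matrix.mulVec, dotProduct]
  have hentry : ∀ j : Fin (2*k+1), pathLap (2*k+1) i j * φ j =
      (if i = j then (if i.val = 0 ∨ i.val = 2*k then 1 else 2) * φ j else 0)
      + (if i.val + 1 = j.val then -φ j else 0)
      + (if j.val + 1 = i.val then -φ j else 0) := by
    intro j
    rw [pathLap]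
    by_cases hij : i = j
    · subst hij
      have h1 : ¬(i.val + 1 = i.val) := by omega
      have h2 : (2*k+1) - 1 = 2*k := by omega
      simp only [Matrix.of_apply, h2, if_true, if_neg h1]
      ring
    · simp only [Matrix.of_apply, if_neg hij]
      by_cases h1 : i.val + 1 = j.val
      · have h2 : ¬(j.val + 1 = i.val) := by omega
        rw [if_pos (Or.inl h1), if_pos h1, if_neg h2]
        ring
      · by_cases h2 : j.val + 1 = i.val
        · rw [if_pos (Or.inr h2), if_neg h1, if_pos h2]
          ring
        · have h3 : ¬(i.val + 1 = j.val ∨ j.val + 1 = i.val) := by tauto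
          rw [if_neg h3, if_neg h1, if_neg h2]
          ring
  rw [Finset.sum_congr rfl (fun j _ => hentry j)]
  rw [Finset.sum_add_distrib, Finset.sum_add_distrib]
  rw [Finset.sum_ite_eq, sum_if_succ i (fun j => -φ j), sum_if_pred i (fun j => -φ j)]
  simp only [Finset.mem_univ, if_pos]
  have e1 : (if h : i.val + 1 < 2*k+1 then -φ ⟨i.val+1, h⟩ else 0)
      = -(if h : i.val + 1 < 2*k+1 then φ ⟨i.val+1, h⟩ else 0) := by
    split <;> simp
  have e2 : (if h : 0 < i.val then -φ ⟨i.val - 1, Nat.lt_of_le_of_lt (Nat.sub_le _ _) i.isLt⟩ else 0)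
      = -(if h : 0 < i.val then φ ⟨i.val - 1, Nat.lt_of_le_of_lt (Nat.sub_le _ _) i.isLt⟩ else 0) := by
    split <;> simp
  rw [e1, e2]
  ring

end Stmt13Aux
namespace Stmt13Aux

lemma idx_val (k : ℕ) (j : ℤ) (h1 : -(k:ℤ) ≤ j) (h2 : j ≤ k) :
    ((idx k j : Fin (2*k+1)) : ℕ) = (j + k).toNat := by
  have : (j + k).toNat < 2*k+1 := by omega
  simp [idx, Nat.mod_eq_of_lt this]

lemma idx_cast (k : ℕ) (j : ℤ) (h1 : -(k:ℤ) ≤ j) (h2 : j ≤ k) :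
    (((idx k j : Fin (2*k+1)) : ℕ) : ℤ) = j + k := by
  rw [idx_val k j h1 h2]; omega

lemma sum_idx (k : ℕ) (g : Fin (2*k+1) → ℝ) :
    ∑ j ∈ Finset.Icc (-(k:ℤ)) k, g (idx k j) = ∑ i, g i := by
  apply Finset.sum_nbij' (i := fun j => idx k j) (j := fun i => (i : ℤ) - k)
  · intro a _; exact Finset.mem_univ _
  · intro i _
    simp only [Finset.mem_Icc]
    have := i.isLt
    omega
  · intro j hj
    simp only [Finset.mem_Icc] at hj
    rw [idx_cast k j hj.1 hj.2]
    omega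
  · intro i _
    apply Fin.ext
    have := i.isLt
    rw [idx_val k _ (by omega) (by omega)]
    omega
  · intro j _; rfl

end Stmt13Aux
namespace Stmt13Aux

lemma eqn_interior (k : ℕ) (α : ℤ → ℝ) (φ : Fin (2*k+1) → ℝ) (lam : ℝ)
    (hGS : (Hmat k α).mulVec φ = lam • φ) (j : ℤ) (h1 : -(k:ℤ) < j) (h2 : j < k) :
    2 * φ (idx k j) + α j * φ (idx k j) - φ (idx k (j-1)) - φ (idx k (j+1))
      = lam * φ (idx k j) := by
  have hv := idx_val k j (le_of_lt h1) (le_of_lt h2)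
  have key := congrFun hGS (idx k j)
  rw [hmat_mulVec, Pi.smul_apply, smul_eq_mul] at key
  have hc1 : ¬((idx k j).val = 0 ∨ (idx k j).val = 2*k) := by omega
  have hlt : (idx k j).val + 1 < 2*k+1 := by omega
  have hgt : 0 < (idx k j).val := by omega
  rw [if_neg hc1, dif_pos hlt, dif_pos hgt] at key
  have e1 : (⟨(idx k j).val + 1, hlt⟩ : Fin (2*k+1)) = idx k (j+1) := by
    apply Fin.ext
    show (idx k j).val + 1 = (idx k (j+1)).val
    rw [idx_val k (j+1) (by omega) (by omega)]
    omega
  have e2 : (⟨(idx k j).val - 1, Nat.lt_of_le_of_lt (Nat.sub_le _ _) (idx k j).isLt⟩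
      : Fin (2*k+1)) = idx k (j-1) := by
    apply Fin.ext
    show (idx k j).val - 1 = (idx k (j-1)).val
    rw [idx_val k (j-1) (by omega) (by omega)]
    omega
  have e3 : ((idx k j : ℕ) : ℤ) - k = j := by omega
  rw [e1, e2, e3] at key
  linarith [key]

lemma eqn_left (k : ℕ) (α : ℤ → ℝ) (φ : Fin (2*k+1) → ℝ) (lam : ℝ)
    (hGS : (Hmat k α).mulVec φ = lam • φ) (hk : 0 < k) :
    φ (idx k (-(k:ℤ))) - φ (idx k (-(k:ℤ)+1)) + α (-(k:ℤ)) * φ (idx k (-(k:ℤ)))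
      = lam * φ (idx k (-(k:ℤ))) := by
  have hv := idx_val k (-(k:ℤ)) (le_refl _) (by omega)
  have key := congrFun hGS (idx k (-(k:ℤ)))
  rw [hmat_mulVec, Pi.smul_apply, smul_eq_mul] at key
  have hc1 : ((idx k (-(k:ℤ))).val = 0 ∨ (idx k (-(k:ℤ))).val = 2*k) := by omega
  have hlt : (idx k (-(k:ℤ))).val + 1 < 2*k+1 := by omega
  have hgt : ¬(0 < (idx k (-(k:ℤ))).val) := by omega
  rw [if_pos hc1, dif_pos hlt, dif_neg hgt] at key
  have e1 : (⟨(idx k (-(k:ℤ))).val + 1, hlt⟩ : Fin (2*k+1)) = idx k (-(k:ℤ)+1) := by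
    apply Fin.ext
    show (idx k (-(k:ℤ))).val + 1 = (idx k (-(k:ℤ)+1)).val
    rw [idx_val k (-(k:ℤ)+1) (by omega) (by omega)]
    omega
  have e3 : ((idx k (-(k:ℤ)) : ℕ) : ℤ) - k = -(k:ℤ) := by omega
  rw [e1, e3] at key
  linarith [key]

lemma eqn_right (k : ℕ) (α : ℤ → ℝ) (φ : Fin (2*k+1) → ℝ) (lam : ℝ)
    (hGS : (Hmat k α).mulVec φ = lam • φ) (hk : 0 < k) :
    φ (idx k (k:ℤ)) - φ (idx k ((k:ℤ)-1)) + α (k:ℤ) * φ (idx k (k:ℤ))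
      = lam * φ (idx k (k:ℤ)) := by
  have hv := idx_val k (k:ℤ) (by omega) (le_refl _)
  have key := congrFun hGS (idx k (k:ℤ))
  rw [hmat_mulVec, Pi.smul_apply, smul_eq_mul] at key
  have hc1 : ((idx k (k:ℤ)).val = 0 ∨ (idx k (k:ℤ)).val = 2*k) := by omega
  have hlt : ¬((idx k (k:ℤ)).val + 1 < 2*k+1) := by omega
  have hgt : 0 < (idx k (k:ℤ)).val := by omega
  rw [if_pos hc1, dif_neg hlt, dif_pos hgt] at key
  have e2 : (⟨(idx k (k:ℤ)).val - 1, Nat.lt_of_le_of_lt (Nat.sub_le _ _) (idx k (k:ℤ)).isLt⟩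
      : Fin (2*k+1)) = idx k ((k:ℤ)-1) := by
    apply Fin.ext
    show (idx k (k:ℤ)).val - 1 = (idx k ((k:ℤ)-1)).val
    rw [idx_val k ((k:ℤ)-1) (by omega) (by omega)]
    omega
  have e3 : ((idx k (k:ℤ) : ℕ) : ℤ) - k = (k:ℤ) := by omega
  rw [e2, e3] at key
  linarith [key]

end Stmt13Aux
namespace Stmt13Aux

lemma sum_Icc_split (f : ℤ → ℝ) (a b c : ℤ) (h1 : a - 1 ≤ b) (h2 : b ≤ c) :
    ∑ j ∈ Finset.Icc a c, f j = ∑ j ∈ Finset.Icc a b, f j + ∑ j ∈ Finset.Icc (b+1) c, f j := by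
  rw [← Finset.sum_union]
  · congr 1
    ext x
    simp only [Finset.mem_union, Finset.mem_Icc]
    omega
  · rw [Finset.disjoint_left]
    intro x hx hx'
    simp only [Finset.mem_Icc] at hx hx'
    omega

lemma sum_Icc_push (f : ℤ → ℝ) (a j : ℤ) (h : a ≤ j + 1) :
    ∑ i ∈ Finset.Icc a (j+1), f i = ∑ i ∈ Finset.Icc a j, f i + f (j+1) := by
  rw [sum_Icc_split f a j (j+1) (by omega) (by omega), Finset.Icc_self, Finset.sum_singleton]

lemma sum_sub_sq (f : ℤ → ℝ) (s : Finset ℤ) (c : ℝ) :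
    ∑ j ∈ s, (f j - c)^2
      = ∑ j ∈ s, f j^2 - 2*c*(∑ j ∈ s, f j) + (s.card : ℝ) * c^2 := by
  have h : ∀ j ∈ s, (f j - c)^2 = f j^2 - 2*c*f j + c^2 := fun j _ => by ring
  rw [Finset.sum_congr rfl h, Finset.sum_add_distrib, Finset.sum_sub_distrib,
    ← Finset.mul_sum, Finset.sum_const, nsmul_eq_mul]

end Stmt13Aux
namespace Stmt13Aux

set_option maxHeartbeats 2000000 in
lemma key (k : ℕ) (α : ℤ → ℝ) (J : Finset ℤ) (hne : J.Nonempty)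
    (hsupp : ∀ j : ℤ, α j ≠ 0 ↔ j ∈ J) (hpos : ∀ j ∈ J, 0 < α j)
    (rmin rmax : ℤ) (hrmin : rmin = J.min' hne) (hrmax : rmax = J.max' hne)
    (ψ : ℤ → ℝ) (lam : ℝ)
    (hψ : ∀ j, 0 < ψ j)
    (hnorm : ∑ j ∈ Finset.Icc (-(k:ℤ)) k, ψ j ^ 2 = 1)
    (hE1 : ∀ j : ℤ, -(k:ℤ) < j → j < (k:ℤ) →
      2*ψ j + α j * ψ j - ψ (j-1) - ψ (j+1) = lam * ψ j)
    (hE2 : ψ (-(k:ℤ)) - ψ (-(k:ℤ)+1) + α (-(k:ℤ)) * ψ (-(k:ℤ)) = lam * ψ (-(k:ℤ)))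
    (hE3 : ψ (k:ℤ) - ψ ((k:ℤ)-1) + α (k:ℤ) * ψ (k:ℤ) = lam * ψ (k:ℤ))
    (hk : 4 * (rmin.natAbs + rmax.natAbs + 4) ≤ k) :
    0 ≤ (1/2 - ∑ j ∈ Finset.Icc (-(k:ℤ)) rmin, (ψ j - ψ rmin)^2)
        + (1/2 - ∑ j ∈ Finset.Icc rmax (k:ℤ), (ψ j - ψ rmax)^2)
    ∧ (1/2 - ∑ j ∈ Finset.Icc (-(k:ℤ)) rmin, (ψ j - ψ rmin)^2)
        + (1/2 - ∑ j ∈ Finset.Icc rmax (k:ℤ), (ψ j - ψ rmax)^2)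
      ≤ (384 * ((rmax - rmin).toNat : ℝ)
            * (2 + J.sup' hne α)^(2*(rmax - rmin).toNat) * (J.inf' hne α)⁻¹ + 1536)
        * (J.inf' hne α)⁻¹ * (k:ℝ)⁻¹ := by
  have hk' : 4 * ((rmin.natAbs : ℤ) + (rmax.natAbs : ℤ) + 4) ≤ (k:ℤ) := by exact_mod_cast hk
  set a : ℤ := -(k:ℤ) with ha
  have hrminJ : rmin ∈ J := hrmin ▸ J.min'_mem hne
  have hrmaxJ : rmax ∈ J := hrmax ▸ J.max'_mem hne
  have hminmax : rmin ≤ rmax := by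
    rw [hrmin, hrmax]; exact J.min'_le _ (J.max'_mem hne)
  have hbounds : a < rmin ∧ rmax < (k:ℤ) ∧ (16:ℤ) ≤ k ∧ (k:ℤ) ≤ 2*((k:ℤ) + rmin)
      ∧ (k:ℤ) + rmin ≤ 2*(k:ℤ) := by
    constructor; omega
    constructor; omega
    constructor; omega
    constructor; omega
    omega
  obtain ⟨hb1, hb2, hb3, hb4, hb5⟩ := hbounds
  have halphann : ∀ i, 0 ≤ α i := by
    intro i
    by_cases h : α i = 0
    · rw [h]
    · exact le_of_lt (hpos i ((hsupp i).mp h))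
  have halphazero : ∀ i, (i < rmin ∨ rmax < i) → α i = 0 := by
    intro i hi
    by_contra h
    have hiJ := (hsupp i).mp h
    have := hrmin ▸ J.min'_le i hiJ
    have := hrmax ▸ J.le_max' i hiJ
    omega
  have haminpos : 0 < J.inf' hne α := (Finset.lt_inf'_iff hne).mpr hpos
  have hαle : ∀ i, α i ≤ J.sup' hne α := by
    intro i
    by_cases h : α i = 0
    · rw [h]
      exact le_trans (le_of_lt (hpos rmin hrminJ)) (Finset.le_sup' α hrminJ)
    · exact Finset.le_sup' α ((hsupp i).mp h)
  -- partial sums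
  set S : ℤ → ℝ := fun c => ∑ i ∈ Finset.Icc a c, ψ i with hS
  have hSpos : ∀ c, a ≤ c → 0 < S c := by
    intro c hc
    apply Finset.sum_pos (fun i _ => hψ i)
    exact ⟨a, Finset.mem_Icc.mpr ⟨le_refl _, hc⟩⟩
  have hSmono : ∀ c c', c ≤ c' → S c ≤ S c' := by
    intro c c' hcc
    apply Finset.sum_le_sum_of_subset_of_nonneg
    · exact Finset.Icc_subset_Icc_right hcc
    · exact fun i _ _ => le_of_lt (hψ i)
  -- the basic telescoped eigenvalue identity
  have hstep : ∀ j : ℤ, a ≤ j → j < (k:ℤ) →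
      ψ j - ψ (j+1) + (∑ i ∈ Finset.Icc a j, α i * ψ i) = lam * S j := by
    refine Int.le_induction ?_ ?_
    · intro _
      rw [Finset.Icc_self, Finset.sum_singleton]
      simp only [hS, Finset.Icc_self, Finset.sum_singleton]
      linarith [hE2]
    · intro j hj IH hjk
      have hIH := IH (by omega)
      have heq := hE1 (j+1) (by omega) (by omega)

      rw [show j+1-1 = j by ring] at heq
      have hp : (∑ i ∈ Finset.Icc a (j+1), α i * ψ i)
          = (∑ i ∈ Finset.Icc a j, α i * ψ i) + α (j+1) * ψ (j+1) :=
        sum_Icc_push (fun i => α i * ψ i) a j (by omega)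
      have hp2 : S (j+1) = S j + ψ (j+1) := sum_Icc_push ψ a j (by omega)
      rw [hp, hp2]
      linarith
  -- summing over everything
  have hfull : ∑ i ∈ Finset.Icc a (k:ℤ), α i * ψ i = lam * S (k:ℤ) := by
    have h1 := hstep ((k:ℤ)-1) (by omega) (by omega)
    rw [show (k:ℤ)-1+1 = (k:ℤ) by ring] at h1
    have hp : (∑ i ∈ Finset.Icc a (k:ℤ), α i * ψ i)
        = (∑ i ∈ Finset.Icc a ((k:ℤ)-1), α i * ψ i) + α (k:ℤ) * ψ (k:ℤ) := by
      have h := sum_Icc_push (fun i => α i * ψ i) a ((k:ℤ)-1) (by omega)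
      rw [show (k:ℤ)-1+1 = (k:ℤ) by ring] at h
      exact h
    have hSk : S (k:ℤ) = S ((k:ℤ)-1) + ψ (k:ℤ) := by
      have h := sum_Icc_push ψ a ((k:ℤ)-1) (by omega)
      rw [show (k:ℤ)-1+1 = (k:ℤ) by ring] at h
      exact h
    rw [hp, hSk]
    linarith [hE3]
  have hsum_ge : ∀ j0 ∈ J, (J.inf' hne α) * ψ j0 ≤ lam * S (k:ℤ) := by
    intro j0 hj0
    rw [← hfull]
    have hj0in : j0 ∈ Finset.Icc a (k:ℤ) := by
      rw [Finset.mem_Icc]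
      have := hrmin ▸ J.min'_le j0 hj0
      have := hrmax ▸ J.le_max' j0 hj0
      omega
    calc (J.inf' hne α) * ψ j0 ≤ α j0 * ψ j0 := by
          apply mul_le_mul_of_nonneg_right (Finset.inf'_le α hj0) (le_of_lt (hψ j0))
      _ ≤ ∑ i ∈ Finset.Icc a (k:ℤ), α i * ψ i := by
          apply Finset.single_le_sum (fun i _ => mul_nonneg (halphann i) (le_of_lt (hψ i))) hj0in
  have hlampos : 0 < lam := by
    have h1 := hsum_ge rmin hrminJ
    have h2 : 0 < (J.inf' hne α) * ψ rmin := mul_pos haminpos (hψ rmin)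
    have h3 : 0 < lam * S (k:ℤ) := lt_of_lt_of_le h2 h1
    by_contra h
    push_neg at h
    have : lam * S (k:ℤ) ≤ 0 :=
      mul_nonpos_of_nonpos_of_nonneg h (le_of_lt (hSpos (k:ℤ) (by omega)))
    linarith
  -- pure Laplacian steps on the left of rmin
  have hleft : ∀ j : ℤ, a ≤ j → j ≤ rmin - 1 → ψ j - ψ (j+1) = lam * S j := by
    intro j hj1 hj2
    have h := hstep j hj1 (by omega)
    have hz : (∑ i ∈ Finset.Icc a j, α i * ψ i) = 0 := by
      apply Finset.sum_eq_zero
      intro i hi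
      rw [Finset.mem_Icc] at hi
      rw [halphazero i (Or.inl (by omega))]
      ring
    rw [hz] at h
    linarith
  -- ψ is decreasing on [a, rmin]
  have hdec : ∀ j : ℤ, a ≤ j → ∀ j' : ℤ, j ≤ j' → j' ≤ rmin → ψ j' ≤ ψ j := by
    intro j hj
    refine Int.le_induction ?_ ?_
    · intro _; exact le_refl _
    · intro n hn IH hn1
      have h1 := hleft n (by omega) (by omega)
      have h2 : 0 < lam * S n := mul_pos hlampos (hSpos n (by omega))
      have h3 := IH (by omega)
      linarith
  -- telescoped second sums
  have htel : ∀ c : ℤ, a ≤ c → c ≤ rmin →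
      ψ a - ψ c = lam * ∑ j ∈ Finset.Icc a (c-1), S j := by
    refine Int.le_induction ?_ ?_
    · intro _
      rw [Finset.Icc_eq_empty (by omega), Finset.sum_empty, sub_self]
      ring
    · intro n hn IH hn1
      have hIH := IH (by omega)
      have hl := hleft n (by omega) (by omega)
      have hp : (∑ j ∈ Finset.Icc a (n+1-1), S j) = (∑ j ∈ Finset.Icc a (n-1), S j) + S n := by
        rw [show n+1-1 = n by ring]
        have h := sum_Icc_push S a (n-1) (by omega)
        rw [show n-1+1 = n by ring] at h
        exact h
      rw [hp, mul_add]
      linarith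
  -- the eigenvalue bound lam ≤ 128 / k²
  have hlamle : lam * (k:ℝ)^2 ≤ 128 := by
    set q : ℤ := (k:ℤ) + rmin with hq
    have hq8 : 8 ≤ q := by omega
    set r : ℤ := q / 2 with hr
    have hrf : 0 ≤ r ∧ 2*r ≤ q ∧ q ≤ 2*r + 1 := by
      refine ⟨?_, ?_, ?_⟩ <;> omega
    set m : ℤ := a + r with hm
    have ham : a ≤ m := by omega
    have hmr : m < rmin := by omega
    have hqr : rmin - m = q - r := by omega
    -- card facts
    have hcard1 : ((Finset.Icc a m).card : ℝ) = (r:ℝ) + 1 := by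
      have hz : ((Finset.Icc a m).card : ℤ) = r + 1 := by
        rw [Int.card_Icc]; omega
      exact_mod_cast hz
    have hcard2 : ((Finset.Icc m (rmin-1)).card : ℝ) = (q:ℝ) - (r:ℝ) := by
      have hz : ((Finset.Icc m (rmin-1)).card : ℤ) = q - r := by
        rw [Int.card_Icc]; omega
      exact_mod_cast hz
    have hcard3 : ((Finset.Icc a (m-1)).card : ℝ) = (r:ℝ) := by
      have hz : ((Finset.Icc a (m-1)).card : ℤ) = r := by
        rw [Int.card_Icc]; omega
      exact_mod_cast hz
    have hqrR : (0:ℝ) < (q:ℝ) - (r:ℝ) := by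
      have : (0:ℤ) < q - r := by omega
      exact_mod_cast this
    have hrR : (0:ℝ) ≤ (r:ℝ) := by exact_mod_cast hrf.1
    -- S m ≥ (r+1) ψ m
    have hSm : ((r:ℝ)+1) * ψ m ≤ S m := by
      have h := Finset.card_nsmul_le_sum (Finset.Icc a m) ψ (ψ m)
        (fun i hi => hdec i (Finset.mem_Icc.mp hi).1 m (Finset.mem_Icc.mp hi).2 (by omega))
      rw [nsmul_eq_mul, hcard1] at h
      exact h
    -- tail bound
    have htail0 : ((q:ℝ) - r) * S m ≤ ∑ j ∈ Finset.Icc m (rmin-1), S j := by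
      have h := Finset.card_nsmul_le_sum (Finset.Icc m (rmin-1)) S (S m)
        (fun i hi => hSmono m i (Finset.mem_Icc.mp hi).1)
      rw [nsmul_eq_mul, hcard2] at h
      exact h
    have hsplit : ∑ j ∈ Finset.Icc a (rmin-1), S j
        = ∑ j ∈ Finset.Icc a (m-1), S j + ∑ j ∈ Finset.Icc m (rmin-1), S j := by
      have h := sum_Icc_split S a (m-1) (rmin-1) (by omega) (by omega)
      rw [show m-1+1 = m by ring] at h
      exact h
    have htel1 := htel rmin (by omega) (le_refl _)
    have htelm := htel m (by omega) (by omega)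
    -- ψ m - ψ rmin = lam * tail
    have hmid0 : ψ m - ψ rmin = lam * ∑ j ∈ Finset.Icc m (rmin-1), S j := by
      rw [hsplit, mul_add] at htel1
      linarith
    -- chord inequalities
    have hchord1 : ψ a - ψ m ≤ lam * ((r:ℝ) * S m) := by
      have hsum_le : ∑ j ∈ Finset.Icc a (m-1), S j ≤ (r:ℝ) * S m := by
        have h := Finset.sum_le_card_nsmul (Finset.Icc a (m-1)) S (S m)
          (fun i hi => hSmono i m (by have := (Finset.mem_Icc.mp hi).2; omega))
        rw [nsmul_eq_mul, hcard3] at h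
        exact h
      calc ψ a - ψ m = lam * ∑ j ∈ Finset.Icc a (m-1), S j := htelm
        _ ≤ lam * ((r:ℝ) * S m) := mul_le_mul_of_nonneg_left hsum_le (le_of_lt hlampos)
    have hchord2 : lam * (((q:ℝ)-r) * S m) ≤ ψ m - ψ rmin := by
      rw [hmid0]
      exact mul_le_mul_of_nonneg_left htail0 (le_of_lt hlampos)
    -- (B) : (q-r) ψ a ≤ q ψ m
    have hB : ((q:ℝ)-r) * ψ a ≤ (q:ℝ) * ψ m := by
      have t1 : ((q:ℝ)-r) * (ψ a - ψ m) ≤ ((q:ℝ)-r) * (lam * ((r:ℝ) * S m)) :=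
        mul_le_mul_of_nonneg_left hchord1 (le_of_lt hqrR)
      have t2 : (r:ℝ) * (lam * (((q:ℝ)-r) * S m)) ≤ (r:ℝ) * (ψ m - ψ rmin) :=
        mul_le_mul_of_nonneg_left hchord2 hrR
      have t0 : 0 ≤ (r:ℝ) * ψ rmin := mul_nonneg hrR (le_of_lt (hψ rmin))
      linarith only [t1, t2, t0]
    -- (A) : lam * (q-r) * (r+1) * ψ m ≤ ψ a
    have hA : lam * (((q:ℝ)-r) * (((r:ℝ)+1) * ψ m)) ≤ ψ a := by
      have h1 : ((q:ℝ)-r) * (((r:ℝ)+1) * ψ m) ≤ ∑ j ∈ Finset.Icc a (rmin-1), S j := by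
        calc ((q:ℝ)-r) * (((r:ℝ)+1) * ψ m) ≤ ((q:ℝ)-r) * S m :=
              mul_le_mul_of_nonneg_left hSm (le_of_lt hqrR)
          _ ≤ ∑ j ∈ Finset.Icc m (rmin-1), S j := htail0
          _ ≤ ∑ j ∈ Finset.Icc a (rmin-1), S j := by
              rw [hsplit]
              have : 0 ≤ ∑ j ∈ Finset.Icc a (m-1), S j :=
                Finset.sum_nonneg (fun i hi => le_of_lt (hSpos i (Finset.mem_Icc.mp hi).1))
              linarith
      have h2 := mul_le_mul_of_nonneg_left h1 (le_of_lt hlampos)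
      have h3 := hψ rmin
      linarith [htel1]
    -- combine : lam * (q-r)^2 * (r+1) ≤ q
    have hP2 : lam * (((q:ℝ)-r)^2 * ((r:ℝ)+1)) ≤ (q:ℝ) := by
      have t3 := mul_le_mul_of_nonneg_left hA (le_of_lt hqrR)
      have hψm := hψ m
      have t4 : lam * (((q:ℝ)-r)^2 * ((r:ℝ)+1)) * ψ m ≤ (q:ℝ) * ψ m := by
        linarith only [t3, hB]
      exact le_of_mul_le_mul_right t4 hψm
    -- cast comparisons
    have hkq : (k:ℝ) ≤ 2*(q:ℝ) := by exact_mod_cast (by omega : (k:ℤ) ≤ 2*q)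
    have hq2k : (q:ℝ) ≤ 2*(k:ℝ) := by exact_mod_cast (by omega : q ≤ 2*(k:ℤ))
    have hc1 : (k:ℝ) ≤ 4*((q:ℝ)-r) := by
      have : (k:ℤ) ≤ 4*(q-r) := by omega
      exact_mod_cast this
    have hc2 : (k:ℝ) ≤ 4*((r:ℝ)+1) := by
      have : (k:ℤ) ≤ 4*(r+1) := by omega
      exact_mod_cast this
    have hkpos : (0:ℝ) < (k:ℝ) := by exact_mod_cast (by omega : (0:ℤ) < (k:ℤ))
    have d1 : lam * ((k:ℝ) * ((k:ℝ) * (k:ℝ)))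
        ≤ lam * ((4*((q:ℝ)-r)) * ((4*((q:ℝ)-r)) * (4*((r:ℝ)+1)))) := by
      apply mul_le_mul_of_nonneg_left _ (le_of_lt hlampos)
      apply mul_le_mul hc1 _ (by positivity) (by linarith)
      apply mul_le_mul hc1 hc2 (le_of_lt hkpos) (by linarith)
    have d2 : lam * (k:ℝ)^3 ≤ 128 * (k:ℝ) := by
      have e1 : lam * ((4*((q:ℝ)-r)) * ((4*((q:ℝ)-r)) * (4*((r:ℝ)+1))))
          = 64 * (lam * (((q:ℝ)-r)^2 * ((r:ℝ)+1))) := by ring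
      linarith only [d1, e1, hP2, hq2k]
    nlinarith [d2, hkpos, sq_nonneg ((k:ℝ))]
  -- right side: increasing beyond rmax
  have hrstep : ∀ j : ℤ, rmax ≤ j → j ≤ (k:ℤ) - 1 → ψ (j+1) - ψ j = lam * (S (k:ℤ) - S j) := by
    intro j hj1 hj2
    have h := hstep j (by omega) (by omega)
    have hz : (∑ i ∈ Finset.Icc a (k:ℤ), α i * ψ i) = (∑ i ∈ Finset.Icc a j, α i * ψ i) := by
      rw [sum_Icc_split (fun i => α i * ψ i) a j (k:ℤ) (by omega) (by omega)]
      have hzz : (∑ i ∈ Finset.Icc (j+1) (k:ℤ), α i * ψ i) = 0 :=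
        Finset.sum_eq_zero (fun i hi => by
          rw [halphazero i (Or.inr (by have := Finset.mem_Icc.mp hi; omega))]; ring)
      rw [hzz]; ring
    rw [← hz, hfull] at h
    linarith
  have hinc : ∀ j : ℤ, rmax ≤ j → j ≤ (k:ℤ) → ψ rmax ≤ ψ j := by
    refine Int.le_induction ?_ ?_
    · intro _; exact le_refl _
    · intro n hn IH hn1
      have h1 := hrstep n (by omega) (by omega)
      have h2 : S n ≤ S (k:ℤ) := hSmono n (k:ℤ) (by omega)
      have h3 := IH (by omega)
      have h4 : 0 ≤ lam * (S (k:ℤ) - S n) :=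
        mul_nonneg (le_of_lt hlampos) (by linarith only [h2])
      linarith only [h1, h3, h4]
  -- middle growth
  set G : ℝ := 2 + J.sup' hne α with hG
  have hsup_pos : 0 < J.sup' hne α :=
    lt_of_lt_of_le (hpos rmin hrminJ) (Finset.le_sup' α hrminJ)
  have hG1 : (1:ℝ) ≤ G := by rw [hG]; linarith
  have hG0 : (0:ℝ) ≤ G := by linarith
  have hmid : ∀ t : ℤ, rmin ≤ t → t ≤ rmax → ψ t ≤ G^((t - rmin).toNat) * ψ rmin := by
    refine Int.le_induction ?_ ?_
    · intro _; simp
    · intro t ht IH ht1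
      have hIH := IH (by omega)
      have heq := hE1 t (by omega) (by omega)
      have hstep1 : ψ (t+1) ≤ G * ψ t := by
        have h1 := hψ (t-1)
        have h2 : 0 < lam * ψ t := mul_pos hlampos (hψ t)
        have h3 := mul_le_mul_of_nonneg_right (hαle t) (le_of_lt (hψ t))
        rw [hG]
        linarith only [heq, h1, h2, h3]
      have htn : ((t + 1 - rmin).toNat) = (t - rmin).toNat + 1 := by omega
      rw [htn, pow_succ]
      calc ψ (t+1) ≤ G * ψ t := hstep1
        _ ≤ G * (G^((t-rmin).toNat) * ψ rmin) := by
            apply mul_le_mul_of_nonneg_left hIH hG0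
        _ = G^((t-rmin).toNat) * G * ψ rmin := by ring
  set d : ℕ := (rmax - rmin).toNat with hd
  have hmid2 : ∀ t : ℤ, rmin ≤ t → t ≤ rmax → ψ t ≤ G^d * ψ rmin := by
    intro t h1 h2
    calc ψ t ≤ G^((t - rmin).toNat) * ψ rmin := hmid t h1 h2
      _ ≤ G^d * ψ rmin := by
        apply mul_le_mul_of_nonneg_right _ (le_of_lt (hψ rmin))
        exact pow_le_pow_right₀ hG1 (by omega)
  -- global quantities
  have hkpos : (0:ℝ) < (k:ℝ) := by exact_mod_cast (by omega : (0:ℤ) < (k:ℤ))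
  have hk16R : (16:ℝ) ≤ (k:ℝ) := by exact_mod_cast (by omega : (16:ℤ) ≤ (k:ℤ))
  have hlam1 : lam ≤ 1 := by nlinarith [hlamle, hk16R, hkpos, sq_nonneg ((k:ℝ)-16)]
  have hSsq : (S (k:ℤ))^2 ≤ 3*(k:ℝ) := by
    have h := sq_sum_le_card_mul_sum_sq (s := Finset.Icc a (k:ℤ)) (f := ψ)
    rw [hnorm] at h
    have hcard : ((Finset.Icc a (k:ℤ)).card : ℝ) ≤ 3*(k:ℝ) := by
      have hz : ((Finset.Icc a (k:ℤ)).card : ℤ) ≤ 3*(k:ℤ) := by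
        rw [Int.card_Icc]; omega
      exact_mod_cast hz
    calc (S (k:ℤ))^2 ≤ ((Finset.Icc a (k:ℤ)).card : ℝ) * 1 := h
      _ ≤ 3*(k:ℝ) := by linarith
  have hA1 : ψ rmin * J.inf' hne α ≤ lam * S (k:ℤ) := by
    have := hsum_ge rmin hrminJ; linarith
  have hA2 : ψ rmax * J.inf' hne α ≤ lam * S (k:ℤ) := by
    have := hsum_ge rmax hrmaxJ; linarith
  have hLS_nn : 0 ≤ lam * S (k:ℤ) := le_of_lt (mul_pos hlampos (hSpos _ (by omega)))
  -- sum abbreviations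
  set SL := ∑ j ∈ Finset.Icc a rmin, ψ j with hSL
  set SR := ∑ j ∈ Finset.Icc rmax (k:ℤ), ψ j with hSR
  set QL := ∑ j ∈ Finset.Icc a rmin, ψ j^2 with hQL
  set QR := ∑ j ∈ Finset.Icc rmax (k:ℤ), ψ j^2 with hQR
  set Mid := ∑ j ∈ Finset.Icc (rmin+1) (rmax-1), ψ j^2 with hMid
  set nL := ((Finset.Icc a rmin).card : ℝ) with hnL
  set nR := ((Finset.Icc rmax (k:ℤ)).card : ℝ) with hnR
  have hexpL : ∑ j ∈ Finset.Icc a rmin, (ψ j - ψ rmin)^2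
      = QL - 2*(ψ rmin)*SL + nL*(ψ rmin)^2 := sum_sub_sq ψ _ (ψ rmin)
  have hexpR : ∑ j ∈ Finset.Icc rmax (k:ℤ), (ψ j - ψ rmax)^2
      = QR - 2*(ψ rmax)*SR + nR*(ψ rmax)^2 := sum_sub_sq ψ _ (ψ rmax)
  have hOV : (if rmin = rmax then (ψ rmin)^2 else 0) ≤ (ψ rmin)^2
      ∧ 0 ≤ (if rmin = rmax then (ψ rmin)^2 else 0) := by
    constructor
    · split
      · exact le_refl _
      · exact sq_nonneg _
    · split
      · exact sq_nonneg _
      · exact le_refl _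
  have hsplitnorm : QL + QR = 1 - Mid + (if rmin = rmax then (ψ rmin)^2 else 0) := by
    have h1 : (1:ℝ) = QL + ∑ j ∈ Finset.Icc (rmin+1) (k:ℤ), ψ j^2 := by
      rw [← hnorm]
      exact sum_Icc_split (fun j => ψ j^2) a rmin (k:ℤ) (by omega) (by omega)
    rcases eq_or_lt_of_le hminmax with heq | hlt
    · rw [if_pos heq]
      have hMid0 : Mid = 0 := by
        rw [hMid, Finset.Icc_eq_empty (by omega), Finset.sum_empty]
      have h2 : QR = (ψ rmin)^2 + ∑ j ∈ Finset.Icc (rmin+1) (k:ℤ), ψ j^2 := by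
        rw [hQR, ← heq]
        have h := sum_Icc_split (fun j => ψ j^2) rmin rmin (k:ℤ) (by omega) (by omega)
        rw [Finset.Icc_self, Finset.sum_singleton] at h
        exact h
      rw [hMid0, h2]
      linarith
    · rw [if_neg (by omega)]
      have h2 : ∑ j ∈ Finset.Icc (rmin+1) (k:ℤ), ψ j^2 = Mid + QR := by
        have h := sum_Icc_split (fun j => ψ j^2) (rmin+1) (rmax-1) (k:ℤ) (by omega) (by omega)
        rw [show rmax-1+1 = rmax by ring] at h
        exact h
      linarith
  -- lower bound ingredients
  have hSLge : nL * ψ rmin ≤ SL := by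
    have h := Finset.card_nsmul_le_sum (Finset.Icc a rmin) ψ (ψ rmin)
      (fun i hi => hdec i (Finset.mem_Icc.mp hi).1 rmin (Finset.mem_Icc.mp hi).2 (le_refl _))
    rw [nsmul_eq_mul] at h
    exact h
  have hSRge : nR * ψ rmax ≤ SR := by
    have h := Finset.card_nsmul_le_sum (Finset.Icc rmax (k:ℤ)) ψ (ψ rmax)
      (fun i hi => hinc i (Finset.mem_Icc.mp hi).1 (Finset.mem_Icc.mp hi).2)
    rw [nsmul_eq_mul] at h
    exact h
  have hnL1 : (1:ℝ) ≤ nL := by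
    have h : (1:ℕ) ≤ (Finset.Icc a rmin).card :=
      Finset.card_pos.mpr ⟨rmin, Finset.mem_Icc.mpr ⟨by omega, le_refl _⟩⟩
    rw [hnL]; exact_mod_cast h
  have hnR1 : (1:ℝ) ≤ nR := by
    have h : (1:ℕ) ≤ (Finset.Icc rmax (k:ℤ)).card :=
      Finset.card_pos.mpr ⟨rmax, Finset.mem_Icc.mpr ⟨le_refl _, by omega⟩⟩
    rw [hnR]; exact_mod_cast h
  have hMidnn : 0 ≤ Mid := Finset.sum_nonneg (fun j _ => sq_nonneg _)
  constructor
  · -- lower bound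
    have t1 : nL * (ψ rmin)^2 ≤ ψ rmin * SL := by
      have h := mul_le_mul_of_nonneg_right hSLge (le_of_lt (hψ rmin))
      linarith only [h]
    have t2 : nR * (ψ rmax)^2 ≤ ψ rmax * SR := by
      have h := mul_le_mul_of_nonneg_right hSRge (le_of_lt (hψ rmax))
      linarith only [h]
    have t3 : (ψ rmin)^2 ≤ nL * (ψ rmin)^2 := by
      have h := mul_le_mul_of_nonneg_right hnL1 (sq_nonneg (ψ rmin))
      linarith only [h]
    have t4 : (0:ℝ) ≤ nR * (ψ rmax)^2 :=
      mul_nonneg (by linarith [hnR1]) (sq_nonneg _)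
    rw [hexpL, hexpR]
    linarith only [hsplitnorm, hOV.1, hMidnn, t1, t2, t3, t4]
  · -- upper bound
    set amin := J.inf' hne α with hamin
    have hamin2k : (0:ℝ) < amin^2 * (k:ℝ) := by positivity
    have hrhs : (384 * (d:ℝ) * G^(2*d) * amin⁻¹ + 1536) * amin⁻¹ * (k:ℝ)⁻¹
        = (384*(d:ℝ)*G^(2*d) + 1536*amin) / (amin^2*(k:ℝ)) := by
      have h1 : amin ≠ 0 := ne_of_gt haminpos
      have h2 : (k:ℝ) ≠ 0 := ne_of_gt hkpos
      field_simp
    rw [hexpL, hexpR, hrhs, le_div_iff₀ hamin2k]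
    have hub : (1/2 - (QL - 2*(ψ rmin)*SL + nL*(ψ rmin)^2))
        + (1/2 - (QR - 2*(ψ rmax)*SR + nR*(ψ rmax)^2))
        ≤ Mid + (2*(ψ rmin)*SL + 2*(ψ rmax)*SR) := by
      have u1 : 0 ≤ nL*(ψ rmin)^2 := mul_nonneg (by linarith) (sq_nonneg _)
      have u2 : 0 ≤ nR*(ψ rmax)^2 := mul_nonneg (by linarith) (sq_nonneg _)
      linarith only [hsplitnorm, hOV.2, u1, u2]
    have hMidle : Mid ≤ (d:ℝ) * (G^(2*d) * (ψ rmin)^2) := by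
      have hcardm : ((Finset.Icc (rmin+1) (rmax-1)).card : ℝ) ≤ (d:ℝ) := by
        have hz : (Finset.Icc (rmin+1) (rmax-1)).card ≤ d := by
          rw [Int.card_Icc, hd]; omega
        exact_mod_cast hz
      have hterm : ∀ j ∈ Finset.Icc (rmin+1) (rmax-1), ψ j^2 ≤ G^(2*d)*(ψ rmin)^2 := by
        intro j hj
        have hj' := Finset.mem_Icc.mp hj
        have h1 : ψ j ≤ G^d * ψ rmin := hmid2 j (by omega) (by omega)
        have h2 : (0:ℝ) ≤ ψ j := le_of_lt (hψ j)
        have h3 : ψ j^2 ≤ (G^d*ψ rmin)^2 := pow_le_pow_left₀ h2 h1 2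
        calc ψ j^2 ≤ (G^d*ψ rmin)^2 := h3
          _ = G^(2*d)*(ψ rmin)^2 := by ring
      have h := Finset.sum_le_card_nsmul (Finset.Icc (rmin+1) (rmax-1))
        (fun j => ψ j^2) (G^(2*d)*(ψ rmin)^2) hterm
      rw [nsmul_eq_mul] at h
      calc Mid ≤ ((Finset.Icc (rmin+1) (rmax-1)).card:ℝ) * (G^(2*d)*(ψ rmin)^2) := h
        _ ≤ (d:ℝ) * (G^(2*d)*(ψ rmin)^2) := by
            apply mul_le_mul_of_nonneg_right hcardm (by positivity)
    have hq1 : lam * (S (k:ℤ))^2 * (k:ℝ) ≤ 384 := by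
      have e1 : lam * (S (k:ℤ))^2 ≤ lam * (3*(k:ℝ)) :=
        mul_le_mul_of_nonneg_left hSsq (le_of_lt hlampos)
      have e2 : lam * (S (k:ℤ))^2 * (k:ℝ) ≤ lam * (3*(k:ℝ)) * (k:ℝ) :=
        mul_le_mul_of_nonneg_right e1 (le_of_lt hkpos)
      linarith only [hlamle, e2]
    have hq2 : (lam * S (k:ℤ))^2 * (k:ℝ) ≤ 384 := by
      have eX : 0 ≤ lam*(S (k:ℤ))^2 := mul_nonneg (le_of_lt hlampos) (sq_nonneg _)
      have e2 := mul_le_mul_of_nonneg_right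
        (mul_le_mul_of_nonneg_right hlam1 eX) (le_of_lt hkpos)
      linarith only [e2, hq1]
    have hSLeq : S rmin = SL := rfl
    have hSLnn : (0:ℝ) ≤ SL := by
      have h := hSpos rmin (by omega); linarith only [hSLeq ▸ h]
    have hSLle : SL ≤ S (k:ℤ) := by
      have h := hSmono rmin (k:ℤ) (by omega)
      linarith only [hSLeq ▸ h]
    have hSRnn : (0:ℝ) ≤ SR :=
      Finset.sum_nonneg (fun i _ => le_of_lt (hψ i))
    have hSRle : SR ≤ S (k:ℤ) := by
      apply Finset.sum_le_sum_of_subset_of_nonneg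
      · exact Finset.Icc_subset_Icc_left (by omega)
      · exact fun i _ _ => le_of_lt (hψ i)
    have hpr1 : (ψ rmin * amin)^2 * (k:ℝ) ≤ 384 := by
      have hnn : 0 ≤ ψ rmin * amin := mul_nonneg (le_of_lt (hψ rmin)) (le_of_lt haminpos)
      have h1 : (ψ rmin * amin)^2 ≤ (lam * S (k:ℤ))^2 := by
        apply pow_le_pow_left₀ hnn (by linarith [hA1])
      have h2 := mul_le_mul_of_nonneg_right h1 (le_of_lt hkpos)
      linarith only [hq2, h2]
    have hcorr1 : 2*(ψ rmin)*SL*(amin*(k:ℝ)) ≤ 768 := by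
      have h1 : ψ rmin * amin * SL ≤ lam * S (k:ℤ) * S (k:ℤ) :=
        mul_le_mul hA1 hSLle hSLnn hLS_nn
      have h2 := mul_le_mul_of_nonneg_right h1 (le_of_lt hkpos)
      linarith only [hq1, h2]
    have hcorr2 : 2*(ψ rmax)*SR*(amin*(k:ℝ)) ≤ 768 := by
      have h1 : ψ rmax * amin * SR ≤ lam * S (k:ℤ) * S (k:ℤ) :=
        mul_le_mul hA2 hSRle hSRnn hLS_nn
      have h2 := mul_le_mul_of_nonneg_right h1 (le_of_lt hkpos)
      linarith only [hq1, h2]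
    have hMfin : Mid * (amin^2*(k:ℝ)) ≤ 384*(d:ℝ)*G^(2*d) := by
      have h1 := mul_le_mul_of_nonneg_right hMidle (le_of_lt hamin2k)
      have h2 : (d:ℝ)*(G^(2*d)*(ψ rmin)^2)*(amin^2*(k:ℝ))
          = ((d:ℝ)*G^(2*d))*((ψ rmin*amin)^2*(k:ℝ)) := by ring
      have h3 : ((d:ℝ)*G^(2*d))*((ψ rmin*amin)^2*(k:ℝ)) ≤ ((d:ℝ)*G^(2*d))*384 :=
        mul_le_mul_of_nonneg_left hpr1 (by positivity)
      linarith only [h1, h2, h3]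
    have hCfin : (2*(ψ rmin)*SL + 2*(ψ rmax)*SR) * (amin^2*(k:ℝ)) ≤ 1536*amin := by
      have h1 : (2*(ψ rmin)*SL + 2*(ψ rmax)*SR) * (amin*(k:ℝ)) ≤ 1536 := by
        linarith only [hcorr1, hcorr2]
      have h2 := mul_le_mul_of_nonneg_right h1 (le_of_lt haminpos)
      linarith only [h2]
    have hfinal := mul_le_mul_of_nonneg_right hub (le_of_lt hamin2k)
    linarith only [hfinal, hMfin, hCfin]

end Stmt13Aux

/-- quantitative smallness of `a_{k,1} + a_{k,2}`: there is `c > 0`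
independent of `k` such that `0 ≤ a_{k,1} + a_{k,2} ≤ c (min_j α_j)⁻¹ k⁻¹` for all but
finitely many `k`. -/
theorem stmt13 (α : ℤ → ℝ) (J : Finset ℤ) (hne : J.Nonempty)
    (hsupp : ∀ j : ℤ, α j ≠ 0 ↔ j ∈ J) (hpos : ∀ j ∈ J, 0 < α j)
    (rmin rmax : ℤ) (hrmin : rmin = J.min' hne) (hrmax : rmax = J.max' hne) :
    ∃ c : ℝ, 0 < c ∧ ∀ᶠ k : ℕ in atTop, ∀ φ : Fin (2*k+1) → ℝ, isGS k α φ →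
      0 ≤ (1/2 - ∑ j ∈ Finset.Icc (-(k : ℤ)) rmin, (φ (idx k j) - φ (idx k rmin)) ^ 2) +
          (1/2 - ∑ j ∈ Finset.Icc rmax (k : ℤ), (φ (idx k j) - φ (idx k rmax)) ^ 2) ∧
      (1/2 - ∑ j ∈ Finset.Icc (-(k : ℤ)) rmin, (φ (idx k j) - φ (idx k rmin)) ^ 2) +
          (1/2 - ∑ j ∈ Finset.Icc rmax (k : ℤ), (φ (idx k j) - φ (idx k rmax)) ^ 2) ≤
        c * (J.inf' hne α)⁻¹ * (k : ℝ)⁻¹ := by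
  have hrminJ : rmin ∈ J := hrmin ▸ J.min'_mem hne
  have hinf : 0 < J.inf' hne α := (Finset.lt_inf'_iff hne).mpr hpos
  have hsup : 0 < J.sup' hne α := lt_of_lt_of_le (hpos _ hrminJ) (Finset.le_sup' α hrminJ)
  refine ⟨384 * ((rmax - rmin).toNat : ℝ)
      * (2 + J.sup' hne α)^(2*(rmax - rmin).toNat) * (J.inf' hne α)⁻¹ + 1536, ?_, ?_⟩
  · have t1 : (0:ℝ) ≤ 384 * ((rmax - rmin).toNat : ℝ)
        * (2 + J.sup' hne α)^(2*(rmax - rmin).toNat) * (J.inf' hne α)⁻¹ := by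
      apply mul_nonneg
      apply mul_nonneg
      · positivity
      · exact pow_nonneg (by linarith) _
      · exact inv_nonneg.mpr (le_of_lt hinf)
    linarith
  · filter_upwards [Filter.eventually_ge_atTop (4 * (rmin.natAbs + rmax.natAbs + 4))] with k hkk
    intro φ hGS
    obtain ⟨hEq, hNorm, hPos⟩ := hGS
    have hk0 : 0 < k := by omega
    exact Stmt13Aux.key k α J hne hsupp hpos rmin rmax hrmin hrmax
      (fun j => φ (idx k j)) (lam0 (Hmat k α))
      (fun j => hPos _)
      ((Stmt13Aux.sum_idx k (fun i => φ i ^ 2)).trans hNorm)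
      (fun j h1 h2 => Stmt13Aux.eqn_interior k α φ _ hEq j h1 h2)
      (Stmt13Aux.eqn_left k α φ _ hEq hk0)
      (Stmt13Aux.eqn_right k α φ _ hEq hk0)
      hkk
end

section
/- Upper bound for the ground state energy via a trial state (Theorem 3.4): λ_0(V_k, α) ≤ (1/2)(1 - b_k)(λ_0(V_{k+r_min}, ∞δ_0) + λ_0(V_{k-r_max}, ∞δ_0)) + b_k c_k², where c_k² = λ_0(V_k, ∞δ_0)/(2+ε) for arbitrary ε > 0 and b_k ∈ (0,1] is determined by normalizing the trial state ψ_k(j) = (1-b_k)^{1/2}( cos-profile on the left segment + cos-profile on the right segment ) + (Σα_j)^{-1/2} b_k^{1/2} c_k. -/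
open Finset Filter Topology Matrix

/- ## Auxiliary lemmas -/

section Aux

open RealInnerProductSpace

lemma evs_bddBelow {n : ℕ} (M : Matrix (Fin n) (Fin n) ℝ) : BddBelow (evs M) := by
  refine ⟨-(∑ i, ∑ j, |M i j|), ?_⟩
  rintro μ ⟨f, hf, hMf⟩
  obtain ⟨i1, hi1⟩ := Function.ne_iff.mp hf
  obtain ⟨i, -, hi⟩ := Finset.exists_max_image Finset.univ (fun j => |f j|) ⟨i1, Finset.mem_univ i1⟩
  have hfi : 0 < |f i| := lt_of_lt_of_le (abs_pos.mpr hi1) (hi i1 (Finset.mem_univ i1))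
  have h2 : |μ| * |f i| ≤ (∑ i, ∑ j, |M i j|) * |f i| := by
    have h3 : (M.mulVec f) i = μ * f i := by rw [hMf]; rfl
    calc |μ| * |f i| = |∑ j, M i j * f j| := by
          rw [← abs_mul, ← h3]; rfl
      _ ≤ ∑ j, |M i j * f j| := Finset.abs_sum_le_sum_abs _ _
      _ ≤ ∑ j, |M i j| * |f i| := by
          refine Finset.sum_le_sum fun j _ => ?_
          rw [abs_mul]
          exact mul_le_mul_of_nonneg_left (hi j (Finset.mem_univ j)) (abs_nonneg _)
      _ = (∑ j, |M i j|) * |f i| := by rw [Finset.sum_mul]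
      _ ≤ (∑ i, ∑ j, |M i j|) * |f i| := by
          refine mul_le_mul_of_nonneg_right ?_ (le_of_lt hfi)
          exact Finset.single_le_sum (f := fun i => ∑ j, |M i j|)
            (fun i _ => Finset.sum_nonneg fun j _ => abs_nonneg _) (Finset.mem_univ i)
  have := le_of_mul_le_mul_right h2 hfi
  linarith [neg_abs_le μ]

lemma rayleigh {n : ℕ} (M : Matrix (Fin n) (Fin n) ℝ) (hM : M.IsHermitian)
    (v : Fin n → ℝ) (hv : ∑ i, v i ^ 2 = 1) :
    lam0 M ≤ ∑ i, v i * M.mulVec v i := by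
  classical
  have hn : 0 < n := by
    by_contra h
    push_neg at h
    interval_cases n
    simp at hv
  haveI : NeZero n := ⟨by omega⟩
  have hsymm : Mᵀ = M := by
    rw [← Matrix.conjTranspose_eq_transpose_of_trivial]; exact hM
  set bb := hM.eigenvectorBasis with hbb
  set lam := hM.eigenvalues with hlam
  set v' : EuclideanSpace ℝ (Fin n) := WithLp.toLp 2 v with hv'
  set c : Fin n → ℝ := fun i => bb.repr v' i with hc
  have hinner_sum : ∀ x y : EuclideanSpace ℝ (Fin n), ⟪x, y⟫ = ∑ i, x i * y i := by
    intro x y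
    simp only [PiLp.inner_apply, RCLike.inner_apply, starRingEnd_apply, star_trivial]
    exact Finset.sum_congr rfl fun i _ => mul_comm _ _
  have hpars : ∑ i, c i ^ 2 = 1 := by
    have h2 : ⟪bb.repr v', bb.repr v'⟫ = ⟪v', v'⟫ := bb.repr.inner_map_map v' v'
    rw [hinner_sum, hinner_sum] at h2
    calc ∑ i, c i ^ 2 = ∑ i, (bb.repr v') i * (bb.repr v') i :=
          Finset.sum_congr rfl fun i _ => pow_two _
      _ = ∑ i, v i * v i := h2
      _ = 1 := by rw [← hv]; exact Finset.sum_congr rfl fun i _ => (pow_two _).symm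
  have hcoef : ∀ i, bb.repr (WithLp.toLp 2 (M.mulVec v) : EuclideanSpace ℝ (Fin n)) i = lam i * c i := by
    intro i
    have key := congrArg (fun w => w ⬝ᵥ v) (hM.mulVec_eigenvectorBasis i)
    simp only at key
    calc bb.repr (WithLp.toLp 2 (M.mulVec v) : EuclideanSpace ℝ (Fin n)) i
        = ⟪bb i, (WithLp.toLp 2 (M.mulVec v) : EuclideanSpace ℝ (Fin n))⟫ := OrthonormalBasis.repr_apply_apply _ _ _
      _ = (⇑(bb i) : Fin n → ℝ) ⬝ᵥ (M *ᵥ v) := hinner_sum _ _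
      _ = (M *ᵥ (⇑(bb i) : Fin n → ℝ)) ⬝ᵥ v := by
          rw [Matrix.dotProduct_mulVec, ← Matrix.vecMul_transpose, hsymm]
      _ = (lam i • (⇑(bb i) : Fin n → ℝ)) ⬝ᵥ v := key
      _ = lam i * ((⇑(bb i) : Fin n → ℝ) ⬝ᵥ v) := by
          rw [smul_dotProduct]; rfl
      _ = lam i * c i := by
          congr 1
          show (⇑(bb i) : Fin n → ℝ) ⬝ᵥ v = bb.repr v' i
          rw [OrthonormalBasis.repr_apply_apply, hinner_sum]
          rfl
  have hrq : ∑ i, v i * M.mulVec v i = ∑ i, lam i * c i ^ 2 := by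
    have h2 : ⟪bb.repr v', bb.repr (WithLp.toLp 2 (M.mulVec v) : EuclideanSpace ℝ (Fin n))⟫
        = ⟪v', (WithLp.toLp 2 (M.mulVec v) : EuclideanSpace ℝ (Fin n))⟫ := bb.repr.inner_map_map _ _
    rw [hinner_sum, hinner_sum] at h2
    calc ∑ i, v i * M.mulVec v i
        = ∑ i, (bb.repr v') i * (bb.repr (WithLp.toLp 2 (M.mulVec v) : EuclideanSpace ℝ (Fin n))) i := h2.symm
      _ = ∑ i, lam i * c i ^ 2 := by
          refine Finset.sum_congr rfl fun i _ => ?_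
          rw [hcoef i]
          have hce : bb.repr v' i = c i := rfl
          rw [hce]; ring
  rw [hrq]
  obtain ⟨i0, -, hi0⟩ := Finset.exists_min_image Finset.univ lam ⟨⟨0, hn⟩, Finset.mem_univ _⟩
  have h5 : lam i0 ≤ ∑ i, lam i * c i ^ 2 := by
    calc lam i0 = ∑ i, lam i0 * c i ^ 2 := by
          rw [← Finset.mul_sum, hpars, mul_one]
      _ ≤ ∑ i, lam i * c i ^ 2 := by
          refine Finset.sum_le_sum fun i _ => ?_
          exact mul_le_mul_of_nonneg_right (hi0 i (Finset.mem_univ i)) (sq_nonneg _)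
  refine le_trans (csInf_le (evs_bddBelow M) ?_) h5
  exact ⟨(bb i0 : Fin n → ℝ), by
      have := bb.orthonormal.ne_zero i0
      intro h; apply this; ext j; exact congrFun h j,
    hM.mulVec_eigenvectorBasis i0⟩

noncomputable def inc (n : ℕ) : Matrix (Fin n) (Fin (n+1)) ℝ :=
  Matrix.of fun i j => (if (j : ℕ) = (i : ℕ) + 1 then (1:ℝ) else 0) - (if (j:ℕ) = (i:ℕ) then 1 else 0)

lemma sum_L1 (n c d : ℕ) : ∑ i ∈ Finset.range n, (if c = i + 1 then (1:ℝ) else 0) * (if d = i + 1 then 1 else 0)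
    = if c = d ∧ 1 ≤ c ∧ c ≤ n then 1 else 0 := by
  induction n with
  | zero => rw [Finset.sum_range_zero]; split_ifs <;> first | rfl | (exfalso; omega)
  | succ m ih => rw [Finset.sum_range_succ, ih]; split_ifs <;> first | (exfalso; omega) | norm_num

lemma sum_L2 (n c d : ℕ) : ∑ i ∈ Finset.range n, (if c = i + 1 then (1:ℝ) else 0) * (if d = i then 1 else 0)
    = if c = d + 1 ∧ d < n then 1 else 0 := by
  induction n with
  | zero => rw [Finset.sum_range_zero]; split_ifs <;> first | rfl | (exfalso; omega)
  | succ m ih => rw [Finset.sum_range_succ, ih]; split_ifs <;> first | (exfalso; omega) | norm_num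

lemma sum_L3 (n c d : ℕ) : ∑ i ∈ Finset.range n, (if c = i then (1:ℝ) else 0) * (if d = i + 1 then 1 else 0)
    = if d = c + 1 ∧ c < n then 1 else 0 := by
  induction n with
  | zero => rw [Finset.sum_range_zero]; split_ifs <;> first | rfl | (exfalso; omega)
  | succ m ih => rw [Finset.sum_range_succ, ih]; split_ifs <;> first | (exfalso; omega) | norm_num

lemma sum_L4 (n c d : ℕ) : ∑ i ∈ Finset.range n, (if c = i then (1:ℝ) else 0) * (if d = i then 1 else 0)
    = if c = d ∧ c < n then 1 else 0 := by
  induction n with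
  | zero => rw [Finset.sum_range_zero]; split_ifs <;> first | rfl | (exfalso; omega)
  | succ m ih => rw [Finset.sum_range_succ, ih]; split_ifs <;> first | (exfalso; omega) | norm_num

lemma pathLap_eq (n : ℕ) (hn : 1 ≤ n) : pathLap (n+1) = (inc n)ᵀ * (inc n) := by
  ext a b
  rw [Matrix.mul_apply]
  have hterm : ∀ i : Fin n, (inc n)ᵀ a i * inc n i b =
      (if (a:ℕ) = (i:ℕ) + 1 then (1:ℝ) else 0) * (if (b:ℕ) = (i:ℕ) + 1 then 1 else 0)
      - (if (a:ℕ) = (i:ℕ) + 1 then (1:ℝ) else 0) * (if (b:ℕ) = (i:ℕ) then 1 else 0)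
      - (if (a:ℕ) = (i:ℕ) then (1:ℝ) else 0) * (if (b:ℕ) = (i:ℕ) + 1 then 1 else 0)
      + (if (a:ℕ) = (i:ℕ) then (1:ℝ) else 0) * (if (b:ℕ) = (i:ℕ) then 1 else 0) := by
    intro i
    simp only [Matrix.transpose_apply, inc, Matrix.of_apply]
    ring
  rw [Finset.sum_congr rfl fun i _ => hterm i]
  have expand : ∀ f g h e : Fin n → ℝ, ∑ i, (f i - g i - h i + e i)
      = (∑ i, f i) - (∑ i, g i) - (∑ i, h i) + (∑ i, e i) := by
    intro f g h e
    rw [Finset.sum_add_distrib, Finset.sum_sub_distrib, Finset.sum_sub_distrib]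
  rw [expand]
  rw [Fin.sum_univ_eq_sum_range (fun i => (if (a:ℕ) = i + 1 then (1:ℝ) else 0) * (if (b:ℕ) = i + 1 then 1 else 0)),
      Fin.sum_univ_eq_sum_range (fun i => (if (a:ℕ) = i + 1 then (1:ℝ) else 0) * (if (b:ℕ) = i then 1 else 0)),
      Fin.sum_univ_eq_sum_range (fun i => (if (a:ℕ) = i then (1:ℝ) else 0) * (if (b:ℕ) = i + 1 then 1 else 0)),
      Fin.sum_univ_eq_sum_range (fun i => (if (a:ℕ) = i then (1:ℝ) else 0) * (if (b:ℕ) = i then 1 else 0))]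
  rw [sum_L1, sum_L2, sum_L3, sum_L4]
  have ha := a.isLt
  have hb := b.isLt
  simp only [pathLap, Matrix.of_apply, Fin.ext_iff]
  split_ifs <;> first | (exfalso; omega) | norm_num

lemma inc_mulVec (n : ℕ) (w : ℕ → ℝ) (i : Fin n) :
    (inc n).mulVec (fun j : Fin (n+1) => w j) i = w ((i:ℕ)+1) - w (i:ℕ) := by
  unfold Matrix.mulVec dotProduct
  simp only [inc, Matrix.of_apply, sub_mul, one_mul, zero_mul, ite_mul]
  rw [Finset.sum_sub_distrib]
  congr 1
  · rw [show (∑ j : Fin (n+1), if (j:ℕ) = (i:ℕ)+1 then w j else 0)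
        = ∑ j : Fin (n+1), if j = (⟨(i:ℕ)+1, by omega⟩ : Fin (n+1)) then w j else 0 from
      Finset.sum_congr rfl fun j _ => by simp [Fin.ext_iff]]
    rw [Finset.sum_ite_eq' Finset.univ]
    simp
  · rw [show (∑ j : Fin (n+1), if (j:ℕ) = (i:ℕ) then w j else 0)
        = ∑ j : Fin (n+1), if j = (⟨(i:ℕ), by omega⟩ : Fin (n+1)) then w j else 0 from
      Finset.sum_congr rfl fun j _ => by simp [Fin.ext_iff]]
    rw [Finset.sum_ite_eq' Finset.univ]
    simp

lemma pathLap_quadform (n : ℕ) (hn : 1 ≤ n) (w : ℕ → ℝ) :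
    ∑ i : Fin (n+1), w i * (pathLap (n+1)).mulVec (fun j : Fin (n+1) => w j) i
      = ∑ l ∈ Finset.range n, (w (l+1) - w l)^2 := by
  have h1 : ∑ i : Fin (n+1), w i * (pathLap (n+1)).mulVec (fun j : Fin (n+1) => w j) i
      = (fun j : Fin (n+1) => w j) ⬝ᵥ (pathLap (n+1)).mulVec (fun j : Fin (n+1) => w j) := rfl
  rw [h1, pathLap_eq n hn, ← Matrix.mulVec_mulVec, Matrix.dotProduct_mulVec,
      Matrix.vecMul_transpose]
  have h2 : ∀ i : Fin n, ((inc n) *ᵥ (fun j : Fin (n+1) => w j)) i * ((inc n) *ᵥ (fun j : Fin (n+1) => w j)) i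
      = (w ((i:ℕ)+1) - w (i:ℕ))^2 := by
    intro i; rw [inc_mulVec]; ring
  unfold dotProduct
  rw [Finset.sum_congr rfl fun i _ => h2 i]
  exact Fin.sum_univ_eq_sum_range (fun l => (w (l+1) - w l)^2) n

lemma keytrig (m N : ℕ) (hm : 1 ≤ m) (hmN : m + 1 < N) (a : ℝ) (u : ℕ → ℝ)
    (hu : ∀ l : ℕ, u l = if l ≤ m then a * Real.cos (((l:ℝ)+1/2) * Real.pi/(2*(m:ℝ)+1)) else 0)
    (hnorm : ∑ l ∈ Finset.range N, u l ^ 2 = 1/2) :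
    ∑ l ∈ Finset.range (N-1), (u (l+1) - u l)^2
      = (2 - 2*Real.cos (Real.pi/(2*(m:ℝ)+1))) * (1/2) := by
  have hD : (2*(m:ℝ)+1) ≠ 0 := by positivity
  have hum : u m = 0 := by
    rw [hu m, if_pos le_rfl]
    have harg : ((m:ℝ)+1/2) * Real.pi/(2*(m:ℝ)+1) = Real.pi/2 := by
      field_simp
    rw [harg, Real.cos_pi_div_two, mul_zero]
  have huz : ∀ l : ℕ, m ≤ l → u l = 0 := by
    intro l hl
    rcases eq_or_lt_of_le hl with h | h
    · rw [← h]; exact hum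
    · rw [hu l, if_neg (by omega)]
  have hnorm' : ∑ l ∈ Finset.range m, u l ^ 2 = 1/2 := by
    rw [← hnorm]
    refine Finset.sum_subset (Finset.range_subset_range.mpr (by omega)) ?_
    intro l _ hl
    simp only [Finset.mem_range, not_lt] at hl
    rw [huz l (by omega)]
    ring
  have hstep : ∑ l ∈ Finset.range (N-1), (u (l+1) - u l)^2
      = ∑ l ∈ Finset.range m, (u (l+1) - u l)^2 := by
    refine (Finset.sum_subset (Finset.range_subset_range.mpr (by omega)) ?_).symm
    intro l _ hl
    simp only [Finset.mem_range, not_lt] at hl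
    rw [huz l (by omega), huz (l+1) (by omega)]
    ring
  have hterm : ∀ l, l < m → (u (l+1) - u l)^2
      = (2 - 2*Real.cos (Real.pi/(2*(m:ℝ)+1))) * u (m-1-l) ^ 2 := by
    intro l hl
    have e0 : (m - 1 - l : ℕ) + (l + 1) = m := by omega
    have hcast : ((m - 1 - l : ℕ) : ℝ) = (m:ℝ) - ((l:ℝ)+1) := by
      have := congrArg (fun x : ℕ => (x : ℝ)) e0
      push_cast at this
      linarith
    rw [hu (l+1), hu l, hu (m-1-l), if_pos (by omega : l + 1 ≤ m), if_pos (by omega : l ≤ m),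
        if_pos (by omega : m - 1 - l ≤ m)]
    push_cast
    rw [hcast]
    set D := 2*(m:ℝ)+1 with hDdef
    have e1 : a * Real.cos (((l:ℝ)+1+1/2) * Real.pi/D) - a * Real.cos (((l:ℝ)+1/2) * Real.pi/D)
        = a * (-2 * Real.sin (((l:ℝ)+1)*Real.pi/D) * Real.sin (Real.pi/D/2)) := by
      rw [← mul_sub, Real.cos_sub_cos]
      have h1 : (((l:ℝ)+1+1/2) * Real.pi/D + ((l:ℝ)+1/2) * Real.pi/D)/2 = ((l:ℝ)+1)*Real.pi/D := by
        field_simp; ring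
      have h2 : (((l:ℝ)+1+1/2) * Real.pi/D - ((l:ℝ)+1/2) * Real.pi/D)/2 = Real.pi/D/2 := by
        field_simp; ring
      rw [h1, h2]
    have e2 : Real.cos (((m:ℝ) - ((l:ℝ)+1) + 1/2)*Real.pi/D) = Real.sin (((l:ℝ)+1)*Real.pi/D) := by
      have h3 : ((m:ℝ) - ((l:ℝ)+1) + 1/2)*Real.pi/D = Real.pi/2 - ((l:ℝ)+1)*Real.pi/D := by
        field_simp; ring
      rw [h3, Real.cos_pi_div_two_sub]
    have e3 : 2 - 2*Real.cos (Real.pi/D) = 4 * Real.sin (Real.pi/D/2)^2 := by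
      have h := Real.sin_sq_eq_half_sub (Real.pi/D/2)
      rw [show 2*(Real.pi/D/2) = Real.pi/D by ring] at h
      linarith
    rw [e1, e2, e3]
    ring
  rw [hstep, Finset.sum_congr rfl (fun l hl => hterm l (Finset.mem_range.mp hl)),
      ← Finset.mul_sum]
  congr 1
  rw [← hnorm']
  exact Finset.sum_range_reflect (fun l => u l ^ 2) m

lemma int_sum (k : ℕ) (f : ℤ → ℝ) :
    ∑ j ∈ Finset.Icc (-(k:ℤ)) (k:ℤ), f j = ∑ l ∈ Finset.range (2*k+1), f ((l:ℤ) - k) := by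
  refine Finset.sum_nbij' (fun j => (j + k).toNat) (fun l => (l:ℤ) - k) ?_ ?_ ?_ ?_ ?_
  · intro a ha; simp only [Finset.mem_Icc] at ha; simp only [Finset.mem_range]; omega
  · intro a ha; simp only [Finset.mem_range] at ha; simp only [Finset.mem_Icc]; omega
  · intro a ha; simp only [Finset.mem_Icc] at ha; omega
  · intro a ha; simp only [Finset.mem_range] at ha; omega
  · intro a ha; simp only [Finset.mem_Icc] at ha; congr 1; omega

lemma hmat_herm (k : ℕ) (α : ℤ → ℝ) : (Hmat k α).IsHermitian := by
  unfold Hmat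
  apply Matrix.IsHermitian.add
  · rw [Matrix.IsHermitian, Matrix.conjTranspose_eq_transpose_of_trivial]
    ext i j
    rcases eq_or_ne i j with h | h
    · subst h; rfl
    · simp only [Matrix.transpose_apply, pathLap, Matrix.of_apply, if_neg h, if_neg (Ne.symm h)]
      exact if_congr or_comm rfl rfl
  · exact Matrix.isHermitian_diagonal _

end Aux

set_option maxHeartbeats 2000000 in
/-- upper bound for the ground state energy, Theorem 3.4:
`λ_0(V_k, α) ≤ (1/2)(1-b_k)(λ_0(V_{k+r_min}, ∞δ_0) + λ_0(V_{k-r_max}, ∞δ_0)) + b_k c_k²`,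
where `c_k² = λ_0(V_k, ∞δ_0)/(2+ε)` and `b_k ∈ (0,1]` normalizes the trial state
`ψ_k(j) = (1-b_k)^{1/2}(cos-profile left + cos-profile right) + (Σα_j)^{-1/2} b_k^{1/2} c_k`. -/
theorem stmt16 (α : ℤ → ℝ) (J : Finset ℤ) (hne : J.Nonempty)
    (hsupp : ∀ j : ℤ, α j ≠ 0 ↔ j ∈ J) (hpos : ∀ j ∈ J, 0 < α j)
    (rmin rmax : ℤ) (hrmin : rmin = J.min' hne) (hrmax : rmax = J.max' hne)
    (ε : ℝ) (hε : 0 < ε)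
    (k : ℕ) (hk : max |rmin| |rmax| < (k : ℤ))
    (A B : ℝ) (hA : 0 < A) (hB : 0 < B) (cL cR : ℤ → ℝ)
    (hcL : ∀ j : ℤ, cL j =
      if -(k : ℤ) ≤ j ∧ j ≤ rmin then
        (Real.sqrt A)⁻¹ *
          Real.cos (((j : ℝ) + (k : ℝ) + 1/2) * Real.pi / (2 * ((k : ℝ) + (rmin : ℝ)) + 1))
      else 0)
    (hcR : ∀ j : ℤ, cR j =
      if rmax ≤ j ∧ j ≤ (k : ℤ) then
        (Real.sqrt B)⁻¹ *
          Real.cos (((k : ℝ) - (j : ℝ) + 1/2) * Real.pi / (2 * ((k : ℝ) - (rmax : ℝ)) + 1))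
      else 0)
    (hnormL : ∑ j ∈ Finset.Icc (-(k : ℤ)) (k : ℤ), cL j ^ 2 = 1/2)
    (hnormR : ∑ j ∈ Finset.Icc (-(k : ℤ)) (k : ℤ), cR j ^ 2 = 1/2)
    (b : ℝ) (hb0 : 0 < b) (hb1 : b ≤ 1)
    (hψ : ∑ i : Fin (2*k+1),
        (Real.sqrt (1 - b) * (cL ((i : ℤ) - k) + cR ((i : ℤ) - k)) +
          (Real.sqrt (∑ j ∈ J, α j))⁻¹ * Real.sqrt b *
            Real.sqrt (dirEVZ k / (2 + ε))) ^ 2 = 1) :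
    lam0 (Hmat k α) ≤
      (1/2) * (1 - b) * (dirEVZ ((k : ℤ) + rmin) + dirEVZ ((k : ℤ) - rmax)) +
        b * (dirEVZ k / (2 + ε)) := by
  -- basic facts
  have habsmin : |rmin| < (k:ℤ) := lt_of_le_of_lt (le_max_left _ _) hk
  have habsmax : |rmax| < (k:ℤ) := lt_of_le_of_lt (le_max_right _ _) hk
  have hrmin_bd := abs_lt.mp habsmin
  have hrmax_bd := abs_lt.mp habsmax
  have hk1 : 1 ≤ k := by omega
  have hrmin_mem : rmin ∈ J := hrmin ▸ J.min'_mem hne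
  have hrmax_mem : rmax ∈ J := hrmax ▸ J.max'_mem hne
  have hminmax : rmin ≤ rmax := by
    rw [hrmin, hrmax]; exact J.min'_le _ (J.max'_mem hne)
  have hSα : 0 < ∑ j ∈ J, α j := Finset.sum_pos hpos hne
  have hdir0 : 0 ≤ dirEVZ k := by
    have := Real.cos_le_one (Real.pi / (2 * (k:ℝ) + 1))
    unfold dirEVZ
    push_cast
    linarith
  have hc2 : 0 ≤ dirEVZ k / (2 + ε) := div_nonneg hdir0 (by linarith)
  -- trial state
  set s : ℝ := (Real.sqrt (∑ j ∈ J, α j))⁻¹ * Real.sqrt b * Real.sqrt (dirEVZ k / (2 + ε))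
    with hs_def
  have hs2 : s^2 = (∑ j ∈ J, α j)⁻¹ * (b * (dirEVZ k / (2+ε))) := by
    rw [hs_def, mul_pow, mul_pow, ← Real.sqrt_inv,
        Real.sq_sqrt (inv_nonneg.mpr hSα.le), Real.sq_sqrt hb0.le, Real.sq_sqrt hc2]
    ring
  set W : ℤ → ℝ := fun j => Real.sqrt (1-b) * (cL j + cR j) + s with hW_def
  set w : ℕ → ℝ := fun l => W ((l:ℤ) - k) with hw_def
  -- vanishing of the profiles
  have hmpos : (1:ℤ) ≤ (k:ℤ) + rmin := by omega
  have hppos : (1:ℤ) ≤ (k:ℤ) - rmax := by omega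
  have hZL : ∀ j : ℤ, rmin ≤ j → cL j = 0 := by
    intro j hj
    rw [hcL]
    split_ifs with h
    · have hj' : j = rmin := le_antisymm h.2 hj
      have hjr : (j:ℝ) = (rmin:ℝ) := by exact_mod_cast congrArg (fun x : ℤ => (x:ℝ)) hj'
      have hden : (0:ℝ) < 2 * ((k:ℝ) + (rmin:ℝ)) + 1 := by
        have : (1:ℝ) ≤ (k:ℝ) + (rmin:ℝ) := by exact_mod_cast hmpos
        linarith
      have harg : ((j:ℝ) + (k:ℝ) + 1/2) * Real.pi / (2 * ((k:ℝ) + (rmin:ℝ)) + 1)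
          = Real.pi / 2 := by
        rw [hjr]
        field_simp
        ring
      rw [harg, Real.cos_pi_div_two, mul_zero]
    · rfl
  have hZR : ∀ j : ℤ, j ≤ rmax → cR j = 0 := by
    intro j hj
    rw [hcR]
    split_ifs with h
    · have hj' : j = rmax := le_antisymm hj h.1
      have hjr : (j:ℝ) = (rmax:ℝ) := by exact_mod_cast congrArg (fun x : ℤ => (x:ℝ)) hj'
      have hden : (0:ℝ) < 2 * ((k:ℝ) - (rmax:ℝ)) + 1 := by
        have : (1:ℝ) ≤ (k:ℝ) - (rmax:ℝ) := by exact_mod_cast hppos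
        linarith
      have harg : ((k:ℝ) - (j:ℝ) + 1/2) * Real.pi / (2 * ((k:ℝ) - (rmax:ℝ)) + 1)
          = Real.pi / 2 := by
        rw [hjr]
        rw [div_eq_iff hden.ne']
        ring
      rw [harg, Real.cos_pi_div_two, mul_zero]
    · rfl
  -- normalization of the trial vector
  have hnormw : ∑ i : Fin (2*k+1), (w (i:ℕ)) ^ 2 = 1 := by
    rw [← hψ]
  -- Hermitian and Rayleigh
  have hray := rayleigh (Hmat k α) (hmat_herm k α) (fun i : Fin (2*k+1) => w (i:ℕ)) hnormw
  refine le_trans hray (le_of_eq ?_)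
  -- split the quadratic form
  have hsplit : ∑ i : Fin (2*k+1), w (i:ℕ) * (Hmat k α).mulVec (fun i : Fin (2*k+1) => w (i:ℕ)) i
      = (∑ i : Fin (2*k+1), w (i:ℕ) * (pathLap (2*k+1)).mulVec (fun i : Fin (2*k+1) => w (i:ℕ)) i)
      + (∑ i : Fin (2*k+1), w (i:ℕ) * (potMat k α).mulVec (fun i : Fin (2*k+1) => w (i:ℕ)) i) := by
    rw [← Finset.sum_add_distrib]
    refine Finset.sum_congr rfl fun i _ => ?_
    rw [Hmat, Matrix.add_mulVec]
    have : (pathLap (2*k+1) *ᵥ fun i : Fin (2*k+1) => w (i:ℕ)) i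
        + (potMat k α *ᵥ fun i : Fin (2*k+1) => w (i:ℕ)) i
        = ((pathLap (2*k+1) *ᵥ fun i : Fin (2*k+1) => w (i:ℕ))
          + (potMat k α *ᵥ fun i : Fin (2*k+1) => w (i:ℕ))) i := rfl
    rw [← this]
    ring
  rw [hsplit]
  -- potential term
  have hpot : ∑ i : Fin (2*k+1), w (i:ℕ) * (potMat k α).mulVec (fun i : Fin (2*k+1) => w (i:ℕ)) i
      = b * (dirEVZ k / (2+ε)) := by
    have h1 : ∀ i : Fin (2*k+1),
        w (i:ℕ) * (potMat k α).mulVec (fun i : Fin (2*k+1) => w (i:ℕ)) i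
        = α ((i:ℤ) - k) * w (i:ℕ) ^ 2 := by
      intro i
      rw [potMat, Matrix.mulVec_diagonal]
      ring
    rw [Finset.sum_congr rfl fun i _ => h1 i]
    have h2 : ∑ i : Fin (2*k+1), α ((i:ℤ) - k) * w (i:ℕ) ^ 2
        = ∑ l ∈ Finset.range (2*k+1), α ((l:ℤ) - k) * W ((l:ℤ) - k) ^ 2 :=
      Fin.sum_univ_eq_sum_range (fun l => α ((l:ℤ) - k) * W ((l:ℤ) - k) ^ 2) (2*k+1)
    rw [h2, ← int_sum k (fun j => α j * W j ^ 2)]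
    have h3 : ∑ j ∈ Finset.Icc (-(k:ℤ)) (k:ℤ), α j * W j ^ 2 = ∑ j ∈ J, α j * W j ^ 2 := by
      refine (Finset.sum_subset ?_ ?_).symm
      · intro j hj
        have h4 := hrmin ▸ J.min'_le j hj
        have h5 := hrmax ▸ J.le_max' j hj
        simp only [Finset.mem_Icc]
        omega
      · intro j _ hj
        have : α j = 0 := by
          by_contra hαj
          exact hj ((hsupp j).mp hαj)
        rw [this, zero_mul]
    rw [h3]
    have h6 : ∀ j ∈ J, α j * W j ^ 2 = α j * s ^ 2 := by
      intro j hj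
      have h7 := hrmin ▸ J.min'_le j hj
      have h8 := hrmax ▸ J.le_max' j hj
      rw [hW_def]
      simp only
      rw [hZL j h7, hZR j h8]
      ring
    rw [Finset.sum_congr rfl h6, ← Finset.sum_mul, hs2, ← mul_assoc,
        mul_inv_cancel₀ (ne_of_gt hSα), one_mul]
  rw [hpot]
  -- kinetic term
  have hkin : ∑ i : Fin (2*k+1), w (i:ℕ) * (pathLap (2*k+1)).mulVec (fun i : Fin (2*k+1) => w (i:ℕ)) i
      = (1-b) * (dirEVZ ((k:ℤ) + rmin) * (1/2) + dirEVZ ((k:ℤ) - rmax) * (1/2)) := by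
    have hq := pathLap_quadform (2*k) (by omega) w
    rw [hq]
    -- termwise splitting
    have hsq : ∀ l ∈ Finset.range (2*k), (w (l+1) - w l)^2
        = (1-b) * ((cL (((l:ℤ)+1) - k) - cL ((l:ℤ) - k))^2
                 + (cR (((l:ℤ)+1) - k) - cR ((l:ℤ) - k))^2) := by
      intro l _
      have hcast : (((l+1:ℕ)):ℤ) - k = ((l:ℤ)+1) - k := by push_cast; ring
      rw [hw_def]
      simp only
      rw [hcast, hW_def]
      simp only
      have hdiff : Real.sqrt (1-b) * (cL (((l:ℤ)+1) - k) + cR (((l:ℤ)+1) - k)) + s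
          - (Real.sqrt (1-b) * (cL ((l:ℤ) - k) + cR ((l:ℤ) - k)) + s)
          = Real.sqrt (1-b) * ((cL (((l:ℤ)+1) - k) - cL ((l:ℤ) - k))
            + (cR (((l:ℤ)+1) - k) - cR ((l:ℤ) - k))) := by ring
      rw [hdiff, mul_pow, Real.sq_sqrt (by linarith : (0:ℝ) ≤ 1 - b)]
      have hcross : (cL (((l:ℤ)+1) - k) - cL ((l:ℤ) - k))
          * (cR (((l:ℤ)+1) - k) - cR ((l:ℤ) - k)) = 0 := by
        by_cases hcase : rmin ≤ (l:ℤ) - k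
        · rw [hZL _ hcase, hZL _ (by omega)]; ring
        · rw [hZR _ (by omega), hZR _ (by omega)]; ring
      nlinarith [hcross]
    rw [Finset.sum_congr rfl hsq, ← Finset.mul_sum, Finset.sum_add_distrib]
    congr 1
    congr 1
    -- left profile
    · have hmL : ((k + rmin).toNat : ℤ) = (k:ℤ) + rmin := Int.toNat_of_nonneg (by omega)
      have hmLR : (((k + rmin).toNat) : ℝ) = (k:ℝ) + (rmin:ℝ) := by
        have := congrArg (fun x : ℤ => (x:ℝ)) hmL
        push_cast at this
        push_cast
        linarith
      have hKT := keytrig ((k + rmin).toNat) (2*k+1) (by omega) (by omega)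
        (Real.sqrt A)⁻¹ (fun l => cL ((l:ℤ) - k))
        (by
          intro l
          rw [hcL ((l:ℤ) - k)]
          by_cases hcond : l ≤ (k + rmin).toNat
          · rw [if_pos (by omega), if_pos hcond]
            congr 2
            push_cast
            rw [hmLR]
            ring
          · rw [if_neg (by omega), if_neg hcond])
        (by rw [← int_sum k (fun j => cL j ^ 2)]; exact hnormL)
      simp only [Nat.add_sub_cancel] at hKT
      have hconv : ∑ l ∈ Finset.range (2*k), (cL (((l:ℤ)+1) - k) - cL ((l:ℤ) - k))^2
          = ∑ l ∈ Finset.range (2*k), ((fun l : ℕ => cL ((l:ℤ) - k)) (l+1)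
            - (fun l : ℕ => cL ((l:ℤ) - k)) l)^2 := by
        refine Finset.sum_congr rfl fun l _ => ?_
        simp only
        have hcc : (((l+1 : ℕ)):ℤ) - k = ((l:ℤ)+1) - k := by push_cast; ring
        rw [hcc]
      rw [hconv, hKT]
      unfold dirEVZ
      rw [show ((((k:ℤ) + rmin) : ℤ) : ℝ) = (k:ℝ) + (rmin:ℝ) by push_cast; ring, hmLR]
    -- right profile
    · have hmR : ((k - rmax).toNat : ℤ) = (k:ℤ) - rmax := Int.toNat_of_nonneg (by omega)
      have hmRR : (((k - rmax).toNat) : ℝ) = (k:ℝ) - (rmax:ℝ) := by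
        have := congrArg (fun x : ℤ => (x:ℝ)) hmR
        push_cast at this
        push_cast
        linarith
      have hKT := keytrig ((k - rmax).toNat) (2*k+1) (by omega) (by omega)
        (Real.sqrt B)⁻¹ (fun l => cR ((k:ℤ) - l))
        (by
          intro l
          rw [hcR ((k:ℤ) - l)]
          by_cases hcond : l ≤ (k - rmax).toNat
          · rw [if_pos (by omega), if_pos hcond]
            congr 2
            push_cast
            rw [hmRR]
            ring
          · rw [if_neg (by omega), if_neg hcond])
        (by
          have h9 : ∑ l ∈ Finset.range (2*k+1), cR ((k:ℤ) - l) ^ 2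
              = ∑ l ∈ Finset.range (2*k+1), cR ((l:ℤ) - k) ^ 2 := by
            rw [← Finset.sum_range_reflect (fun l => cR ((l:ℤ) - k) ^ 2) (2*k+1)]
            refine Finset.sum_congr rfl fun l hl => ?_
            simp only [Finset.mem_range] at hl
            congr 2
            have : ((2*k+1-1-l : ℕ) : ℤ) = 2*(k:ℤ) - l := by omega
            rw [this]
            ring
          rw [h9, ← int_sum k (fun j => cR j ^ 2)]
          exact hnormR)
      simp only [Nat.add_sub_cancel] at hKT
      have hconv : ∑ l ∈ Finset.range (2*k), (cR (((l:ℤ)+1) - k) - cR ((l:ℤ) - k))^2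
          = ∑ l ∈ Finset.range (2*k), ((fun l : ℕ => cR ((k:ℤ) - l)) (l+1)
            - (fun l : ℕ => cR ((k:ℤ) - l)) l)^2 := by
        rw [← Finset.sum_range_reflect
          (fun l => ((fun l : ℕ => cR ((k:ℤ) - l)) (l+1) - (fun l : ℕ => cR ((k:ℤ) - l)) l)^2) (2*k)]
        refine Finset.sum_congr rfl fun l hl => ?_
        simp only [Finset.mem_range] at hl
        simp only
        have hc1 : ((2*k-1-l+1 : ℕ) : ℤ) = 2*(k:ℤ) - l - 1 + 1 := by omega
        have hc2 : ((2*k-1-l : ℕ) : ℤ) = 2*(k:ℤ) - 1 - l := by omega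
        rw [hc1, hc2]
        have e1 : (k:ℤ) - (2*(k:ℤ) - l - 1 + 1) = (l:ℤ) - k := by ring
        have e2 : (k:ℤ) - (2*(k:ℤ) - 1 - l) = ((l:ℤ)+1) - k := by ring
        rw [e1, e2]
        ring
      rw [hconv, hKT]
      unfold dirEVZ
      rw [show ((((k:ℤ) - rmax) : ℤ) : ℝ) = (k:ℝ) - (rmax:ℝ) by push_cast; ring, hmRR]
  rw [hkin]
  ring
end
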